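/- arXiv:1605.07162 — 9 statements merged into one kernel-verified Lean document; each statement's English description precedes it below -/
import Mathlib

section
/- Let M be a matroid on ground set S with injective weight function μ: S → ℝ⁺, and let I be a basis of M. Then I is the maximum-weight basis of M if and only if for every e ∈ I, the set S^{>μ(e)} = {x ∈ S : μ(x) > μ(e)} does not block e. -/
open Matroid Set

variable {α : Type*}

/-- The `ℕ∞`-valued rank of a set `X` in a matroid `M`:
the supremum of the sizes of independent subsets of `X`. -/
noncomputable def Matroid.eRank' (M : Matroid α) (X : Set α) : ℕ∞ :=
  ⨆ I ∈ {I | M.Indep I ∧ I ⊆ X}, I.encard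

/-- A set `A` *blocks* an element `e` if adding `e` to `A` does not increase the rank. -/
def Matroid.Blocks (M : Matroid α) (A : Set α) (e : α) : Prop :=
  M.eRank' (insert e A) = M.eRank' A

/-- The total weight of a set of elements. -/
noncomputable def wt (μ : α → ℝ) (I : Set α) : ℝ := ∑ᶠ e ∈ I, μ e

/-- `I` is a maximum-weight base of `M` with respect to the weight function `μ`. -/
def IsMaxWeightBase (M : Matroid α) (μ : α → ℝ) (I : Set α) : Prop :=
  M.IsBase I ∧ ∀ J, M.IsBase J → wt μ J ≤ wt μ I

/-- The modified cost function `μ_{I,ε}` adding `ε` to the weight of each element of `I`. -/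
noncomputable def modCost (μ : α → ℝ) (I : Set α) (ε : ℝ) : α → ℝ :=
  fun e => μ e + I.indicator (fun _ => ε) e

/-- `I` is an `ε`-optimal base of `M` w.r.t. `μ`:
it is a maximum-weight base for the modified cost `μ_{I,ε}`. -/
def EpsOptimal (M : Matroid α) (μ : α → ℝ) (ε : ℝ) (I : Set α) : Prop :=
  IsMaxWeightBase M (modCost μ I ε) I

/-- Contraction of a matroid, defined by duality: `M ／ C = (M✶ ↾ (M.E \ C))✶`. -/
noncomputable def Matroid.contract' (M : Matroid α) (C : Set α) : Matroid α :=
  (M✶ ↾ (M.E \ C))✶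

/-- The weight of a maximum-weight base of `M` with respect to `μ`. -/
noncomputable def OPTval (M : Matroid α) (μ : α → ℝ) : ℝ :=
  sSup ((fun B => wt μ B) '' {B | M.IsBase B})

lemma eRank'_eq_encard {M : Matroid α} {I X : Set α} (hIX : M.IsBasis' I X) :
    M.eRank' X = I.encard := by
  apply le_antisymm
  · refine iSup₂_le fun J hJ => ?_
    obtain ⟨hJi, hJX⟩ := hJ
    by_contra h
    push_neg at h
    obtain ⟨e, he, hins⟩ := hIX.indep.augment hJi h
    exact hIX.insert_not_indep ⟨hJX he.1, he.2⟩ hins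
  · exact le_iSup₂_of_le I ⟨hIX.indep, hIX.subset⟩ le_rfl

lemma blocks_iff_mem_closure {M : Matroid α} [M.Finite] {A : Set α} {e : α}
    (hA : A ⊆ M.E) (he : e ∈ M.E) :
    M.Blocks A e ↔ e ∈ M.closure A := by
  obtain ⟨I, hIA⟩ := M.exists_isBasis' A
  have hcl : M.closure I = M.closure A := hIA.closure_eq_closure
  constructor
  · intro hb
    by_contra hecl
    have heI : e ∉ I := fun h => hecl (M.mem_closure_of_mem (hIA.subset h) hA)
    have hins : M.Indep (insert e I) := by
      rw [hIA.indep.insert_indep_iff_of_notMem heI]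
      exact ⟨he, fun h => hecl (hcl ▸ h)⟩
    have hbas : M.IsBasis (insert e I) (insert e A) := by
      refine hins.isBasis_of_subset_of_subset_closure
        (insert_subset_insert hIA.subset) ?_
      refine insert_subset (M.mem_closure_of_mem (mem_insert _ _)
        hins.subset_ground) ?_
      refine subset_trans ?_ (M.closure_subset_closure (subset_insert e I))
      rw [hcl]
      exact M.subset_closure A hA
    rw [Matroid.Blocks, eRank'_eq_encard hbas.isBasis', eRank'_eq_encard hIA,
      encard_insert_of_notMem heI] at hb
    have hfin : I.encard ≠ ⊤ := (M.set_finite I hIA.indep.subset_ground).encard_lt_top.ne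
    exact absurd hb ((ENat.lt_add_one_iff hfin).mpr le_rfl).ne'
  · intro hecl
    have hbas : M.IsBasis I (insert e A) := by
      refine hIA.indep.isBasis_of_subset_of_subset_closure
        (hIA.subset.trans (subset_insert _ _)) ?_
      refine insert_subset (hcl ▸ hecl) ?_
      rw [hcl]
      exact M.subset_closure A hA
    rw [Matroid.Blocks, eRank'_eq_encard hbas.isBasis', eRank'_eq_encard hIA]

/-- A base `I` is the maximum-weight base iff for every `e ∈ I`, the set of
elements of strictly larger weight does not block `e`. -/
theorem isMaxWeightBase_iff_not_blocks (M : Matroid α) [M.Finite] (μ : α → ℝ)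
    (hinj : Set.InjOn μ M.E) (hpos : ∀ e ∈ M.E, 0 < μ e)
    (I : Set α) (hI : M.IsBase I) :
    IsMaxWeightBase M μ I ↔ ∀ e ∈ I, ¬ M.Blocks {x ∈ M.E | μ e < μ x} e := by
  have hIfin : I.Finite := M.set_finite I hI.subset_ground
  constructor
  · rintro ⟨-, hmax⟩ e he hblock
    have heE : e ∈ M.E := hI.subset_ground he
    have hA : {x ∈ M.E | μ e < μ x} ⊆ M.E := fun x hx => hx.1
    have hecl : e ∈ M.closure {x ∈ M.E | μ e < μ x} :=
      (blocks_iff_mem_closure hA heE).mp hblock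
    have hIi : M.Indep (I \ {e}) := hI.indep.subset diff_subset
    have hecI : e ∉ M.closure (I \ {e}) := hI.indep.notMem_closure_sdiff_of_mem he
    obtain ⟨f, hfA, hfcl⟩ : ∃ f ∈ {x ∈ M.E | μ e < μ x}, f ∉ M.closure (I \ {e}) := by
      by_contra h
      push_neg at h
      exact hecI (M.closure_subset_closure_of_subset_closure h hecl)
    have hfI : f ∉ I := by
      intro hfI'
      have hm : f ∈ I \ {e} := ⟨hfI', fun h => absurd (h ▸ hfA.2) (lt_irrefl _)⟩
      exact hfcl (M.mem_closure_of_mem hm hIi.subset_ground)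
    have hins : M.Indep (insert f (I \ {e})) := by
      rw [hIi.insert_indep_iff_of_notMem (fun h => hfI h.1)]
      exact ⟨hfA.1, hfcl⟩
    have hbase : M.IsBase (insert f (I \ {e})) := hI.exchange_isBase_of_indep hfI hins
    have hle := hmax _ hbase
    have hfd : f ∉ I \ {e} := fun h => hfI h.1
    have h2 : wt μ (insert f (I \ {e})) = μ f + wt μ (I \ {e}) :=
      finsum_mem_insert μ hfd (hIfin.subset diff_subset)
    have h1 : wt μ I = μ e + wt μ (I \ {e}) := by
      nth_rewrite 1 [show I = insert e (I \ {e}) by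
        rw [Set.insert_diff_singleton, Set.insert_eq_of_mem he]]
      exact finsum_mem_insert μ (fun h => h.2 rfl) (hIfin.subset diff_subset)
    rw [h2, h1] at hle
    linarith [hfA.2]
  · intro hcond
    refine ⟨hI, fun J hJ => ?_⟩
    -- key fact: every element outside I is spanned by the heavier elements of I
    have star : ∀ x ∈ M.E \ I, x ∈ M.closure {y ∈ I | μ x < μ y} := by
      rintro x ⟨hxE, hxI⟩
      have key : ∀ n : ℕ, ∀ K ⊆ I, K.ncard = n → x ∈ M.closure K →
          x ∈ M.closure {y ∈ I | μ x < μ y} := by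
        intro n
        induction n using Nat.strong_induction_on with
        | _ n ih =>
          intro K hKI hKn hxK
          have hKfin : K.Finite := hIfin.subset hKI
          by_cases hall : ∀ y ∈ K, μ x < μ y
          · refine M.closure_subset_closure (Y := {y ∈ I | μ x < μ y}) ?_ hxK
            exact fun y hy => ⟨hKI hy, hall y hy⟩
          push_neg at hall
          obtain ⟨y, hyK, hyx⟩ := hall
          obtain ⟨z, hzK, hzmin⟩ := Set.exists_min_image K μ hKfin ⟨y, hyK⟩
          have hyE : y ∈ M.E := hI.subset_ground (hKI hyK)
          have hzE : z ∈ M.E := hI.subset_ground (hKI hzK)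
          have hzx : μ z < μ x := by
            refine lt_of_le_of_lt (hzmin y hyK) (lt_of_le_of_ne hyx ?_)
            exact fun h => hxI (hinj hyE hxE h ▸ hKI hyK)
          by_cases hx2 : x ∈ M.closure (K \ {z})
          · exact ih (K \ {z}).ncard (hKn ▸ Set.ncard_diff_singleton_lt_of_mem hzK hKfin)
              _ (diff_subset.trans hKI) rfl hx2
          · have hKz : insert z (K \ {z}) = K := by
              rw [Set.insert_diff_singleton, Set.insert_eq_of_mem hzK]
            have hex := Matroid.closure_exchange (M := M) (e := x) (f := z)
              (X := K \ {z}) ⟨by rw [hKz]; exact hxK, hx2⟩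
            have hsub : insert x (K \ {z}) ⊆ {w ∈ M.E | μ z < μ w} := by
              intro w hw
              rcases mem_insert_iff.mp hw with rfl | ⟨hwK, hwz⟩
              · exact ⟨hxE, hzx⟩
              · refine ⟨hI.subset_ground (hKI hwK), lt_of_le_of_ne (hzmin w hwK) ?_⟩
                exact fun h => hwz (hinj (hI.subset_ground (hKI hwK)) hzE h.symm)
            have hblk : M.Blocks {w ∈ M.E | μ z < μ w} z :=
              (blocks_iff_mem_closure (fun w hw => hw.1) hzE).mpr
                (M.closure_subset_closure hsub hex.1)
            exact absurd hblk (hcond z (hKI hzK))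
      exact key I.ncard I Subset.rfl rfl (hI.closure_eq ▸ hxE)
    -- induction on |J \ I|
    have main : ∀ n : ℕ, ∀ J, M.IsBase J → (J \ I).ncard = n → wt μ J ≤ wt μ I := by
      intro n
      induction n using Nat.strong_induction_on with
      | _ n ih =>
        intro J hJ hn
        have hJfin : J.Finite := M.set_finite J hJ.subset_ground
        rcases Set.eq_empty_or_nonempty (J \ I) with hemp | ⟨f, hfJ, hfI⟩
        · rw [hJ.eq_of_subset_isBase hI (diff_eq_empty.mp hemp)]
        · have hfE : f ∈ M.E := hJ.subset_ground hfJ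
          have hstar := star f ⟨hfE, hfI⟩
          have hJf : M.Indep (J \ {f}) := hJ.indep.subset diff_subset
          have hfcl : f ∉ M.closure (J \ {f}) := hJ.indep.notMem_closure_sdiff_of_mem hfJ
          obtain ⟨e, heH, hecl⟩ : ∃ e ∈ {y ∈ I | μ f < μ y}, e ∉ M.closure (J \ {f}) := by
            by_contra h
            push_neg at h
            exact hfcl (M.closure_subset_closure_of_subset_closure h hstar)
          have heJ : e ∉ J := by
            intro heJ'
            have hm : e ∈ J \ {f} := ⟨heJ', fun h => hfI (h ▸ heH.1)⟩
            exact hecl (M.mem_closure_of_mem hm hJf.subset_ground)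
          have hins : M.Indep (insert e (J \ {f})) := by
            rw [hJf.insert_indep_iff_of_notMem (fun h => heJ h.1)]
            exact ⟨hI.subset_ground heH.1, hecl⟩
          have hJ' : M.IsBase (insert e (J \ {f})) := hJ.exchange_isBase_of_indep heJ hins
          have hset : (insert e (J \ {f})) \ I = (J \ I) \ {f} := by
            ext w
            simp only [mem_diff, mem_insert_iff, mem_singleton_iff]
            constructor
            · rintro ⟨rfl | ⟨hwJ, hwf⟩, hwI⟩
              · exact absurd heH.1 hwI
              · exact ⟨⟨hwJ, hwI⟩, hwf⟩
            · rintro ⟨⟨hwJ, hwI⟩, hwf⟩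
              exact ⟨Or.inr ⟨hwJ, hwf⟩, hwI⟩
          have hcard : ((insert e (J \ {f})) \ I).ncard < n := by
            rw [hset, ← hn]
            exact Set.ncard_diff_singleton_lt_of_mem ⟨hfJ, hfI⟩ hJfin.sdiff
          have hw' := ih _ hcard _ hJ' rfl
          have h2 : wt μ (insert e (J \ {f})) = μ e + wt μ (J \ {f}) :=
            finsum_mem_insert μ (fun h => heJ h.1) (hJfin.subset diff_subset)
          have h1 : wt μ J = μ f + wt μ (J \ {f}) := by
            nth_rewrite 1 [show J = insert f (J \ {f}) by
              rw [Set.insert_diff_singleton, Set.insert_eq_of_mem hfJ]]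
            exact finsum_mem_insert μ (fun h => h.2 rfl) (hJfin.subset diff_subset)
          rw [h2] at hw'
          rw [h1]
          linarith [heH.2]
    exact main (J \ I).ncard J hJ rfl
end

section
/- Let M be a matroid on ground set S with injective weight function μ, and let I be a basis of M. Then I is the maximum-weight basis of M if and only if for every real number r, the set I^{≥r} = {x ∈ I : μ(x) ≥ r} is a basis of the restriction of M to S^{≥r} = {x ∈ S : μ(x) ≥ r}. -/
open Matroid Set

variable {α : Type*}

/-- If two nonincreasing lists of reals have the same length, and for each `r` the second has
at most as many entries `≥ r` as the first, then its sum is at most the first's sum. -/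
private lemma aux_sorted_sum_le : ∀ (la lb : List ℝ), la.Pairwise (· ≥ ·) → lb.Pairwise (· ≥ ·) →
    lb.length = la.length →
    (∀ r : ℝ, (lb.filter (fun x => decide (r ≤ x))).length ≤
      (la.filter (fun x => decide (r ≤ x))).length) →
    lb.sum ≤ la.sum
  | [], [], _, _, _, _ => le_refl _
  | [], b :: lb, _, _, hlen, _ => by simp at hlen
  | a :: la, [], _, _, hlen, _ => by simp at hlen
  | a :: la, b :: lb, ha, hb, hlen, hcount => by
    rw [List.pairwise_cons] at ha hb
    have hba : b ≤ a := by
      by_contra hab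
      push_neg at hab
      have h := hcount b
      rw [List.filter_cons, List.filter_cons] at h
      have h1 : la.filter (fun x => decide (b ≤ x)) = [] := by
        refine List.filter_eq_nil_iff.mpr fun x hx => by
          simp only [decide_eq_true_eq]
          exact fun hbx => absurd (hbx.trans (ha.1 x hx)) (not_le.mpr hab)
      have h2 : ¬ (b ≤ a) := not_le.mpr hab
      simp [h1, h2] at h
    have hcount' : ∀ r : ℝ, (lb.filter (fun x => decide (r ≤ x))).length ≤
        (la.filter (fun x => decide (r ≤ x))).length := by
      intro r
      have h := hcount r
      rw [List.filter_cons, List.filter_cons] at h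
      by_cases hr : r ≤ b
      · have hra : r ≤ a := hr.trans hba
        rw [if_pos (by simpa using hr), if_pos (by simpa using hra)] at h
        simpa using h
      · have h2 : lb.filter (fun x => decide (r ≤ x)) = [] := by
          refine List.filter_eq_nil_iff.mpr fun x hx => by
            simp only [decide_eq_true_eq]
            exact fun hrx => hr (hrx.trans (hb.1 x hx))
        simp [h2]
    have hrec := aux_sorted_sum_le la lb ha.2 hb.2 (by simpa using hlen) hcount'
    simp only [List.sum_cons]
    exact add_le_add hba hrec

/-- Multiset version of the comparison lemma. -/
private lemma aux_multiset_sum_le (A B : Multiset ℝ) (hcard : B.card = A.card)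
    (h : ∀ r : ℝ, (B.filter (fun x => r ≤ x)).card ≤ (A.filter (fun x => r ≤ x)).card) :
    B.sum ≤ A.sum := by
  classical
  have hA := Multiset.sort_eq A (· ≥ ·)
  have hB := Multiset.sort_eq B (· ≥ ·)
  have hAs : (A.sort (· ≥ ·)).Pairwise (· ≥ ·) := Multiset.pairwise_sort A _
  have hBs : (B.sort (· ≥ ·)).Pairwise (· ≥ ·) := Multiset.pairwise_sort B _
  have hlen : (B.sort (· ≥ ·)).length = (A.sort (· ≥ ·)).length := by
    rw [Multiset.length_sort, Multiset.length_sort, hcard]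
  have hcnt : ∀ r : ℝ, ((B.sort (· ≥ ·)).filter (fun x => decide (r ≤ x))).length ≤
      ((A.sort (· ≥ ·)).filter (fun x => decide (r ≤ x))).length := by
    intro r
    have hA' : ((A.sort (· ≥ ·)).filter (fun x => decide (r ≤ x))).length
        = (A.filter (fun x => r ≤ x)).card := by
      rw [← Multiset.coe_card, ← Multiset.filter_coe, hA]
    have hB' : ((B.sort (· ≥ ·)).filter (fun x => decide (r ≤ x))).length
        = (B.filter (fun x => r ≤ x)).card := by
      rw [← Multiset.coe_card, ← Multiset.filter_coe, hB]
    rw [hA', hB']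
    exact h r
  have hres := aux_sorted_sum_le (A.sort (· ≥ ·)) (B.sort (· ≥ ·)) hAs hBs hlen hcnt
  rwa [← Multiset.sum_coe, ← Multiset.sum_coe, hA, hB] at hres

/-- In a matroid, an independent subset of `X` has cardinality at most that of a basis of `X`. -/
private lemma aux_indep_encard_le {M : Matroid α} {I X J : Set α} (hIX : M.IsBasis I X)
    (hJ : M.Indep J) (hJX : J ⊆ X) : J.encard ≤ I.encard := by
  have hJr : (M ↾ X).Indep J := (restrict_indep_iff).mpr ⟨hJ, hJX⟩
  obtain ⟨B, hB, hJB⟩ := hJr.exists_isBase_superset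
  calc J.encard ≤ B.encard := encard_le_encard hJB
    _ = I.encard := hB.encard_eq_encard_of_isBase hIX.isBase_restrict

/-- A base `I` is the maximum-weight base iff for every real `r`, the set
`I^{≥r}` is a basis of the restriction of `M` to `S^{≥r}`. -/
theorem isMaxWeightBase_iff_basis_threshold (M : Matroid α) [M.Finite] (μ : α → ℝ)
    (hinj : Set.InjOn μ M.E) (hpos : ∀ e ∈ M.E, 0 < μ e)
    (I : Set α) (hI : M.IsBase I) :
    IsMaxWeightBase M μ I ↔ ∀ r : ℝ, M.IsBasis {x ∈ I | r ≤ μ x} {x ∈ M.E | r ≤ μ x} := by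
  classical
  have hIfin : I.Finite := M.set_finite I hI.subset_ground
  constructor
  · rintro ⟨-, hmax⟩ r
    have hIr : M.Indep {x ∈ I | r ≤ μ x} := hI.indep.subset (sep_subset _ _)
    refine hIr.isBasis_of_forall_insert
      (fun x hx => ⟨hI.subset_ground hx.1, hx.2⟩) ?_
    rintro e ⟨⟨heE, her⟩, heIr⟩
    rw [Matroid.dep_iff]
    refine ⟨fun hins => ?_, insert_subset heE (fun x hx => hI.subset_ground hx.1)⟩
    -- `e ∉ I`
    have heI : e ∉ I := fun heI => heIr ⟨heI, her⟩
    obtain ⟨B, hB, hsub, hBsub⟩ := hins.exists_isBase_subset_union_isBase hI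
    have hBfin : B.Finite := M.set_finite B hB.subset_ground
    have heB : e ∈ B := hsub (mem_insert _ _)
    have hBI : B ⊆ insert e I := by
      refine hBsub.trans ?_
      rintro x (hx | hx)
      · rcases hx with hx | hx
        · exact Or.inl hx
        · exact Or.inr hx.1
      · exact Or.inr hx
    have hIB : I ∩ B = B \ {e} := by
      ext x
      constructor
      · rintro ⟨hxI, hxB⟩
        exact ⟨hxB, fun hxe => heI (by rwa [mem_singleton_iff.mp hxe] at hxI)⟩
      · rintro ⟨hxB, hxe⟩
        rcases hBI hxB with h | h
        · exact absurd h hxe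
        · exact ⟨h, hxB⟩
    have hcard : B.ncard = I.ncard := hB.ncard_eq_ncard_of_isBase hI
    have hIBcard : (I ∩ B).ncard = I.ncard - 1 := by
      rw [hIB, ncard_diff_singleton_of_mem heB, hcard]
    have hIpos : 1 ≤ I.ncard := by
      rw [← hcard]
      exact (Set.ncard_pos hBfin).mpr ⟨e, heB⟩
    have hdiffcard : (I \ B).ncard = 1 := by
      have h1 : (I ∩ B).ncard + (I \ B).ncard = I.ncard := by
        rw [Set.ncard_inter_add_ncard_diff_eq_ncard I B hIfin]
      omega
    obtain ⟨f, hf⟩ := Set.ncard_eq_one.mp hdiffcard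
    have hfI : f ∈ I := by have := hf ▸ (mem_singleton f); exact this.1
    have hfB : f ∉ B := by have := hf ▸ (mem_singleton f); exact this.2
    have hfr : μ f < r := by
      by_contra hge
      push_neg at hge
      exact hfB (hsub (mem_insert_of_mem _ ⟨hfI, hge⟩))
    -- weight computations
    have hwI : wt μ I = wt μ (I ∩ B) + μ f := by
      have h1 : wt μ ((I ∩ B) ∪ (I \ B)) = wt μ (I ∩ B) + wt μ (I \ B) :=
        finsum_mem_union (disjoint_sdiff_right.mono_left inter_subset_right)
          (hIfin.subset inter_subset_left) (hIfin.subset diff_subset)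
      rw [Set.inter_union_diff, hf] at h1
      rw [h1, show wt μ {f} = μ f from finsum_mem_singleton]
    have hwB : wt μ B = wt μ (I ∩ B) + μ e := by
      have h2 : wt μ ((B \ {e}) ∪ {e}) = wt μ (B \ {e}) + wt μ {e} :=
        finsum_mem_union disjoint_sdiff_left (hBfin.subset diff_subset) (finite_singleton e)
      have hBeq : (B \ {e}) ∪ {e} = B := by
        rw [diff_union_self, union_eq_self_of_subset_right (singleton_subset_iff.mpr heB)]
      rw [hBeq, ← hIB] at h2
      rw [h2, show wt μ {e} = μ e from finsum_mem_singleton]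
    have := hmax B hB
    rw [hwI, hwB] at this
    have : μ e ≤ μ f := by linarith
    linarith [hfr.trans_le her]
  · intro h
    refine ⟨hI, fun J hJ => ?_⟩
    have hJfin : J.Finite := M.set_finite J hJ.subset_ground
    rw [wt, wt, finsum_mem_eq_finite_toFinset_sum _ hIfin, finsum_mem_eq_finite_toFinset_sum _ hJfin]
    show (hJfin.toFinset.val.map μ).sum ≤ (hIfin.toFinset.val.map μ).sum
    refine aux_multiset_sum_le _ _ ?_ ?_
    · simp only [Multiset.card_map]
      have : J.ncard = I.ncard := hJ.ncard_eq_ncard_of_isBase hI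
      rwa [ncard_eq_toFinset_card _ hJfin, ncard_eq_toFinset_card _ hIfin] at this
    · intro r
      have key : ∀ (K : Set α) (hK : K.Finite),
          (Multiset.filter (fun x => r ≤ x) (hK.toFinset.val.map μ)).card
          = {x ∈ K | r ≤ μ x}.ncard := by
        intro K hK
        rw [Multiset.filter_map, Multiset.card_map]
        have : {x ∈ K | r ≤ μ x} = ↑(hK.toFinset.filter (fun e => r ≤ μ e)) := by
          ext x; simp [Set.Finite.mem_toFinset]
        rw [this, ncard_coe_finset]
        rfl
      rw [key J hJfin, key I hIfin]
      -- compare via the basis hypothesis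
      have hbasis := h r
      have hJr : M.Indep {x ∈ J | r ≤ μ x} := hJ.indep.subset (sep_subset _ _)
      have hJrX : {x ∈ J | r ≤ μ x} ⊆ {x ∈ M.E | r ≤ μ x} :=
        fun x hx => ⟨hJ.subset_ground hx.1, hx.2⟩
      have hle := aux_indep_encard_le hbasis hJr hJrX
      have hJrfin : {x ∈ J | r ≤ μ x}.Finite := hJfin.subset (sep_subset _ _)
      have hIrfin : {x ∈ I | r ≤ μ x}.Finite := hIfin.subset (sep_subset _ _)
      rwa [hJrfin.encard_eq_coe_toFinset_card, hIrfin.encard_eq_coe_toFinset_card,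
        Nat.cast_le, ← ncard_eq_toFinset_card _ hJrfin, ← ncard_eq_toFinset_card _ hIrfin] at hle
end

section
/- Let M be a matroid with weight function μ and let I be a basis. The following are equivalent: (1) I is ε-optimal for M with respect to μ; (2) for every e ∈ S \ I, the set I^{≥ μ(e) − ε} = {x ∈ I : μ(x) ≥ μ(e) − ε} blocks e. -/
open Matroid Set

variable {α : Type*}

lemma eRank'_indep {M : Matroid α} {A : Set α} (hA : M.Indep A) :
    M.eRank' A = A.encard := by
  refine le_antisymm (iSup₂_le fun J hJ => encard_mono hJ.2) ?_
  exact le_iSup₂_of_le A ⟨hA, Subset.rfl⟩ le_rfl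

lemma blocks_iff {M : Matroid α} {A : Set α} {e : α} (hA : M.Indep A) (hAfin : A.Finite)
    (he : e ∈ M.E) (heA : e ∉ A) : M.Blocks A e ↔ e ∈ M.closure A := by
  constructor
  · intro hb
    by_contra hcl
    have hind : M.Indep (insert e A) := by
      rw [hA.insert_indep_iff_of_notMem heA]; exact ⟨he, hcl⟩
    have h1 : M.eRank' (insert e A) = (insert e A).encard := eRank'_indep hind
    have h2 : M.eRank' A = A.encard := eRank'_indep hA
    rw [Matroid.Blocks, h1, h2, encard_insert_of_notMem heA] at hb
    have hlt : A.encard < A.encard + 1 :=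
      (ENat.lt_add_one_iff hAfin.encard_lt_top.ne).mpr le_rfl
    exact hlt.ne' hb
  · intro hcl
    have hdep : ¬ M.Indep (insert e A) := by
      rw [hA.insert_indep_iff_of_notMem heA]; exact fun h => h.2 hcl
    have h2 : M.eRank' A = A.encard := eRank'_indep hA
    rw [Matroid.Blocks, h2]
    refine le_antisymm (iSup₂_le fun J hJ => ?_) ?_
    · by_cases heJ : e ∈ J
      · have hJe : J \ {e} ⊆ A := fun x hx => (hJ.2 hx.1).resolve_left hx.2
        have hne : J \ {e} ≠ A := fun h => hdep (by
          rw [← h, insert_diff_singleton, insert_eq_of_mem heJ]; exact hJ.1)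
        have hlt : (J \ {e}).encard < A.encard :=
          (hAfin.subset hJe).encard_lt_encard (hJe.ssubset_of_ne hne)
        have : J.encard = (J \ {e}).encard + 1 := by
          rw [← encard_insert_of_notMem (fun h => h.2 rfl),
            insert_diff_singleton, insert_eq_of_mem heJ]
        rw [this]
        exact Order.add_one_le_of_lt hlt
      · exact encard_mono fun x hx => (hJ.2 hx).resolve_left (fun h => heJ (h ▸ hx))
    · exact le_iSup₂_of_le A ⟨hA, subset_insert _ _⟩ le_rfl

lemma wt_insert {μ : α → ℝ} {s : Set α} {a : α} (h : a ∉ s) (hs : s.Finite) :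
    wt μ (insert a s) = μ a + wt μ s := finsum_mem_insert μ h hs

lemma wt_eq_add_diff {μ : α → ℝ} {s : Set α} {a : α} (h : a ∈ s) (hs : s.Finite) :
    wt μ s = μ a + wt μ (s \ {a}) := by
  have h2 := wt_insert (μ := μ) (s := s \ ({a} : Set α)) (a := a) (by simp) hs.diff
  rw [insert_diff_singleton, insert_eq_of_mem h] at h2
  exact h2

/-- A base `I` is `ε`-optimal iff every `e ∈ S \ I` is blocked by
`I^{≥ μ e − ε}`. -/
theorem epsOptimal_iff_blocks (M : Matroid α) [M.Finite] (μ : α → ℝ)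
    (hpos : ∀ e ∈ M.E, 0 < μ e) (ε : ℝ) (hε : 0 < ε)
    (I : Set α) (hI : M.IsBase I) :
    EpsOptimal M μ ε I ↔ ∀ e ∈ M.E \ I, M.Blocks {x ∈ I | μ e - ε ≤ μ x} e := by
  set ν : α → ℝ := modCost μ I ε with hν
  have hνI : ∀ x ∈ I, ν x = μ x + ε := fun x hx => by
    simp [hν, modCost, indicator_of_mem hx]
  have hνnI : ∀ x, x ∉ I → ν x = μ x := fun x hx => by
    simp [hν, modCost, indicator_of_notMem hx]
  have hIfin : I.Finite := M.set_finite I hI.subset_ground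
  constructor
  · rintro ⟨-, hopt⟩ e ⟨heE, heI⟩
    set A : Set α := {x ∈ I | μ e - ε ≤ μ x} with hA
    have hAsub : A ⊆ I := fun x hx => hx.1
    have hAind : M.Indep A := hI.indep.subset hAsub
    have heA : e ∉ A := fun h => heI h.1
    rw [blocks_iff hAind (hIfin.subset hAsub) heE heA]
    by_contra hcl
    have hind : M.Indep (insert e A) := by
      rw [hAind.insert_indep_iff_of_notMem heA]; exact ⟨heE, hcl⟩
    obtain ⟨J, hJ, hsubJ, hJsub⟩ := hind.exists_isBase_subset_union_isBase hI
    have heJ : e ∈ J := hsubJ (mem_insert e A)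
    have hJI : J \ I = {e} := by
      apply Subset.antisymm
      · intro x hx
        rcases hJsub hx.1 with h | h
        · rcases h with rfl | h
          · rfl
          · exact absurd h.1 hx.2
        · exact absurd h hx.2
      · exact singleton_subset_iff.mpr ⟨heJ, heI⟩
    obtain ⟨x, hx⟩ : ∃ x, I \ J = {x} := by
      have := hI.encard_sdiff_comm hJ
      rw [hJI, encard_singleton] at this
      exact encard_eq_one.mp this
    have hxI : x ∈ I := (hx ▸ rfl : x ∈ I \ J).1
    have hxJ : x ∉ J := (hx ▸ rfl : x ∈ I \ J).2
    have hxA : x ∉ A := fun h => hxJ (hsubJ (mem_insert_of_mem _ h))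
    have hJeq : J = insert e (J ∩ I) := by
      rw [insert_eq, ← hJI]
      simp [diff_union_inter]
    have hIeq : I = insert x (J ∩ I) := by
      rw [insert_eq, inter_comm, ← hx]
      simp [diff_union_inter]
    have hJIfin : (J ∩ I).Finite := hIfin.subset inter_subset_right
    have heJI : e ∉ J ∩ I := fun h => heI h.2
    have hxJI : x ∉ J ∩ I := fun h => hxJ h.1
    have hwJ : wt ν J = ν e + wt ν (J ∩ I) := by
      conv_lhs => rw [hJeq]
      exact wt_insert heJI hJIfin
    have hwI : wt ν I = ν x + wt ν (J ∩ I) := by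
      conv_lhs => rw [hIeq]
      exact wt_insert hxJI hJIfin
    have hlt : ν x < ν e := by
      rw [hνI x hxI, hνnI e heI]
      have : ¬ (μ e - ε ≤ μ x) := fun h => hxA ⟨hxI, h⟩
      linarith
    have := hopt J hJ
    rw [hwJ, hwI] at this
    linarith
  · intro hblocks
    refine ⟨hI, ?_⟩
    have key : ∀ n : ℕ, ∀ J, M.IsBase J → (J \ I).ncard ≤ n → wt ν J ≤ wt ν I := by
      intro n
      induction n with
      | zero =>
        intro J hJ hcard
        have hJfin : J.Finite := M.set_finite J hJ.subset_ground
        have : J \ I = ∅ := by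
          rw [← ncard_eq_zero hJfin.diff]
          omega
        have hJI : J ⊆ I := diff_eq_empty.mp this
        rw [hJ.eq_of_subset_isBase hI hJI]
      | succ n ih =>
        intro J hJ hcard
        have hJfin : J.Finite := M.set_finite J hJ.subset_ground
        rcases Nat.lt_or_ge (J \ I).ncard (n + 1) with h | h
        · exact ih J hJ (by omega)
        have hne : (J \ I).Nonempty := by
          rw [nonempty_iff_ne_empty]
          intro h0
          rw [h0, ncard_empty] at h
          omega
        obtain ⟨e, heJ, heI⟩ := hne
        have heE : e ∈ M.E := hJ.subset_ground heJ
        set A : Set α := {x ∈ I | μ e - ε ≤ μ x} with hA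
        have hAsub : A ⊆ I := fun x hx => hx.1
        have hAind : M.Indep A := hI.indep.subset hAsub
        have heA : e ∉ A := fun h => heI h.1
        have hecl : e ∈ M.closure A :=
          (blocks_iff hAind (hIfin.subset hAsub) heE heA).mp (hblocks e ⟨heE, heI⟩)
        have heJcl : e ∉ M.closure (J \ {e}) :=
          hJ.indep.notMem_closure_sdiff_of_mem heJ
        obtain ⟨x, hxA, hxcl⟩ : ∃ x ∈ A, x ∉ M.closure (J \ {e}) := by
          by_contra hc
          push_neg at hc
          exact heJcl (M.closure_subset_closure_of_subset_closure hc hecl)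
        have hxI : x ∈ I := hxA.1
        have hxE : x ∈ M.E := hI.subset_ground hxI
        have hxe : x ≠ e := fun h => heI (h ▸ hxI)
        have hxJ : x ∉ J := fun h =>
          hxcl (M.subset_closure (J \ {e}) ((hJ.indep.diff _).subset_ground) ⟨h, hxe⟩)
        have hJ'ind : M.Indep (insert x (J \ {e})) := by
          rw [(hJ.indep.diff _).insert_indep_iff_of_notMem (fun h => hxJ h.1)]
          exact ⟨hxE, hxcl⟩
        have hJ' : M.IsBase (insert x (J \ {e})) := hJ.exchange_isBase_of_indep hxJ hJ'ind
        have hdiff : insert x (J \ {e}) \ I = (J \ I) \ {e} := by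
          ext y
          simp only [mem_insert_iff, mem_diff, mem_singleton_iff]
          constructor
          · rintro ⟨rfl | ⟨hyJ, hye⟩, hyI⟩
            · exact absurd hxI hyI
            · exact ⟨⟨hyJ, hyI⟩, hye⟩
          · rintro ⟨⟨hyJ, hyI⟩, hye⟩
            exact ⟨Or.inr ⟨hyJ, hye⟩, hyI⟩
        have hcard' : (insert x (J \ {e}) \ I).ncard ≤ n := by
          rw [hdiff]
          rw [ncard_diff_singleton_of_mem (show e ∈ J \ I from ⟨heJ, heI⟩)]
          omega
        have hIH := ih _ hJ' hcard'
        have hwJ' : wt ν (insert x (J \ {e})) = ν x + wt ν (J \ {e}) :=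
          wt_insert (fun h => hxJ h.1) hJfin.diff
        have hwJ : wt ν J = ν e + wt ν (J \ {e}) := wt_eq_add_diff heJ hJfin
        have hle : ν e ≤ ν x := by
          rw [hνI x hxI, hνnI e heI]
          have := hxA.2
          linarith
        rw [hwJ]
        rw [hwJ'] at hIH
        linarith
    intro J hJ
    exact key (J \ I).ncard J hJ le_rfl
end

section
/- Let A ⊆ B ⊆ C be subsets of the ground set of a matroid M with cost function μ. If A is an ε₁-approximate subset of B, and B is an ε₂-approximate subset of C, then A is an (ε₁ + ε₂)-approximate subset of C. -/
open Matroid Set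

variable {α : Type*}

/-- `A` is an `ε`-approximate subset of `B` if some independent set of `M ↾ A`
is an `ε`-optimal base of `M ↾ B`. -/
def IsApproxSubset (M : Matroid α) (μ : α → ℝ) (ε : ℝ) (A B : Set α) : Prop :=
  ∃ I, (M ↾ A).Indep I ∧ EpsOptimal (M ↾ B) μ ε I

section Aux

variable {M : Matroid α} {X S I J B C I₁ I₂ : Set α} {e f : α} {μ : α → ℝ} {ε ε₁ ε₂ : ℝ}

lemma wt_insert_s6 (μ : α → ℝ) (hS : S.Finite) (he : e ∉ S) :
    wt μ (insert e S) = μ e + wt μ S := by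
  unfold wt
  rw [finsum_mem_insert _ he hS]

lemma wt_remove (μ : α → ℝ) (hS : S.Finite) (hf : f ∈ S) :
    wt μ S = μ f + wt μ (S \ {f}) := by
  have h1 : S = insert f (S \ {f}) := by
    rw [Set.insert_diff_singleton, insert_eq_of_mem hf]
  nth_rewrite 1 [h1]
  exact wt_insert_s6 μ (hS.diff) (fun h => h.2 rfl)

/-- Swapping `f` out and `e` in preserves the property of being a basis of `X`,
provided the result is independent. -/
lemma swap_basis (hX : X ⊆ M.E) (hI : M.IsBasis I X) (heX : e ∈ X) (heI : e ∉ I) (hf : f ∈ I)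
    (hind : M.Indep (insert e (I \ {f}))) : M.IsBasis (insert e (I \ {f})) X := by
  set J' := insert e (I \ {f}) with hJ'def
  have hfJ' : f ∈ M.closure J' := by
    by_contra hfc
    have hfE : f ∈ M.E := hI.indep.subset_ground hf
    have hins : M.Indep (insert f J') := hind.insert_indep_iff.2 (Or.inl ⟨hfE, hfc⟩)
    have hJ'f : insert f J' = insert e I := by
      ext x
      simp only [hJ'def, mem_insert_iff, mem_diff, mem_singleton_iff]
      constructor
      · rintro (rfl | rfl | ⟨hx, -⟩)
        · exact Or.inr hf
        · exact Or.inl rfl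
        · exact Or.inr hx
      · rintro (rfl | hx)
        · exact Or.inr (Or.inl rfl)
        · by_cases hxf : x = f
          · exact Or.inl hxf
          · exact Or.inr (Or.inr ⟨hx, hxf⟩)
    rw [hJ'f] at hins
    have heclI : e ∈ M.closure I := hI.subset_closure heX
    exact (hI.indep.insert_dep_iff.2 ⟨heclI, heI⟩).not_indep hins
  have hIcl : I ⊆ M.closure J' := by
    intro x hx
    by_cases hxf : x = f
    · exact hxf ▸ hfJ'
    · exact M.subset_closure J' hind.subset_ground (Or.inr ⟨hx, hxf⟩)
  have hXcl : X ⊆ M.closure J' :=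
    hI.subset_closure.trans (M.closure_subset_closure_of_subset_closure hIcl)
  exact hind.isBasis_of_subset_of_subset_closure
    (insert_subset heX ((diff_subset.trans hI.subset))) hXcl

/-- An `ε`-optimal base satisfies the local exchange condition. -/
lemma epsOptimal_local [M.Finite] (hX : X ⊆ M.E) (hopt : EpsOptimal (M ↾ X) μ ε I)
    (heX : e ∈ X) (heI : e ∉ I) (hf : f ∈ I) (hind : M.Indep (insert e (I \ {f}))) :
    μ e ≤ μ f + ε := by
  obtain ⟨hIb, hmax⟩ := hopt
  rw [isBase_restrict_iff hX] at hIb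
  have hBasis := swap_basis hX hIb heX heI hf hind
  have hle := hmax _ ((isBase_restrict_iff hX).2 hBasis)
  have hIfin : I.Finite := M.set_finite I hIb.indep.subset_ground
  set ν := modCost μ I ε with hν
  have hIfe : e ∉ I \ {f} := fun h => heI h.1
  rw [wt_insert_s6 ν (hIfin.diff) hIfe, wt_remove ν hIfin hf] at hle
  have h1 : ν e = μ e := by simp [hν, modCost, indicator_of_notMem heI]
  have h2 : ν f = μ f + ε := by simp [hν, modCost, indicator_of_mem hf]
  rw [h1, h2] at hle
  linarith

/-- `e` lies in the closure of the elements of `I` that are "essential" for spanning `e`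
(the fundamental circuit minus `e`). -/
lemma mem_closure_fundSet (hI : M.Indep I) (he : e ∈ M.closure I) (heI : e ∉ I) :
    e ∈ M.closure {f ∈ I | e ∉ M.closure (I \ {f})} := by
  set K := {f ∈ I | e ∈ M.closure (I \ {f})} with hKdef
  rcases K.eq_empty_or_nonempty with hKe | hKne
  · have hset : {f ∈ I | e ∉ M.closure (I \ {f})} = I := by
      ext x
      simp only [mem_setOf_eq]
      refine ⟨fun h => h.1, fun hx => ⟨hx, fun hc => ?_⟩⟩
      have hxK : x ∈ K := ⟨hx, hc⟩
      rw [hKe] at hxK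
      exact hxK
    rwa [hset]
  · have hJs := hI.closure_sInter_eq_biInter_closure_of_forall_subset (Js := (fun f => I \ {f}) '' K)
      (hKne.image _) (by rintro J ⟨f, hfK, rfl⟩; exact diff_subset)
    have hmem : e ∈ ⋂ J ∈ ((fun f => I \ {f}) '' K), M.closure J := by
      simp only [mem_iInter]
      rintro J hJ
      simp only [mem_image] at hJ
      obtain ⟨f, hfK, rfl⟩ := hJ
      exact hfK.2
    rw [← hJs] at hmem
    have hsub : ⋂₀ ((fun f => I \ {f}) '' K) = I \ K := by
      ext x
      simp only [mem_sInter, mem_image, forall_exists_index, and_imp, mem_diff]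
      constructor
      · intro h
        obtain ⟨f₀, hf₀⟩ := hKne
        refine ⟨(h _ f₀ hf₀ rfl).1, fun hxK => (h _ x hxK rfl).2 rfl⟩
      · rintro ⟨hxI, hxK⟩ J f hfK rfl
        exact ⟨hxI, fun hxf => hxK (hxf ▸ hfK)⟩
    rw [hsub] at hmem
    refine M.closure_subset_closure (fun x hx => ?_) hmem
    exact ⟨hx.1, fun hc => hx.2 ⟨hx.1, hc⟩⟩

/-- Symmetric basis exchange for bases of `X`. -/
lemma sym_exchange (hX : X ⊆ M.E) (hI : M.IsBasis I X) (hJ : M.IsBasis J X)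
    (heJ : e ∈ J) (heI : e ∉ I) :
    ∃ f ∈ I, f ∉ J ∧ M.Indep (insert e (I \ {f})) ∧ M.IsBasis (insert f (J \ {e})) X := by
  have hecl : e ∈ M.closure I := hI.subset_closure (hJ.subset heJ)
  have hK := mem_closure_fundSet hI.indep hecl heI
  set K := {f ∈ I | e ∉ M.closure (I \ {f})} with hKdef
  have heJ' : e ∉ M.closure (J \ {e}) := hJ.indep.notMem_closure_diff_of_mem heJ
  have hnot : ¬ K ⊆ M.closure (J \ {e}) := fun hsub =>
    heJ' (M.closure_subset_closure_of_subset_closure hsub hK)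
  obtain ⟨f, hfK, hfcl⟩ := not_subset.1 hnot
  have hfI : f ∈ I := hfK.1
  have hfE : f ∈ M.E := hI.indep.subset_ground hfI
  have hfJ : f ∉ J := by
    intro hfJmem
    have hfe : f ≠ e := fun h => heI (h ▸ hfI)
    exact hfcl (M.subset_closure (J \ {e}) (diff_subset.trans hJ.indep.subset_ground)
      ⟨hfJmem, hfe⟩)
  have hind1 : M.Indep (insert e (I \ {f})) :=
    (hI.indep.diff _).insert_indep_iff.2 (Or.inl ⟨hX (hJ.subset heJ), hfK.2⟩)
  have hind2 : M.Indep (insert f (J \ {e})) :=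
    (hJ.indep.diff _).insert_indep_iff.2 (Or.inl ⟨hfE, hfcl⟩)
  have hfcl2 : f ∈ M.closure (insert e (J \ {e})) \ M.closure (J \ {e}) := by
    refine ⟨?_, hfcl⟩
    rw [Set.insert_diff_singleton, insert_eq_of_mem heJ]
    exact hJ.subset_closure (hI.subset hfI)
  have hecl2 := Matroid.closure_exchange hfcl2
  have hJcl : J ⊆ M.closure (insert f (J \ {e})) := by
    intro x hx
    by_cases hxe : x = e
    · exact hxe ▸ hecl2.1
    · exact M.subset_closure _ hind2.subset_ground (Or.inr ⟨hx, hxe⟩)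
  have hXcl : X ⊆ M.closure (insert f (J \ {e})) :=
    hJ.subset_closure.trans (M.closure_subset_closure_of_subset_closure hJcl)
  exact ⟨f, hfI, hfJ, hind1, hind2.isBasis_of_subset_of_subset_closure
    (insert_subset (hI.subset hfI) (diff_subset.trans hJ.subset)) hXcl⟩

/-- The local exchange condition implies global weight-maximality among bases of `X`. -/
lemma local_to_global [M.Finite] (hX : X ⊆ M.E) (hI : M.IsBasis I X) (w : α → ℝ)
    (hloc : ∀ e ∈ X, e ∉ I → ∀ f ∈ I, M.Indep (insert e (I \ {f})) → w e ≤ w f) :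
    ∀ J, M.IsBasis J X → wt w J ≤ wt w I := by
  intro J hJ
  generalize hn : (J \ I).ncard = n
  induction n generalizing J with
  | zero =>
    have hfin : (J \ I).Finite := (M.set_finite J hJ.indep.subset_ground).diff
    have hempty : J \ I = ∅ := (ncard_eq_zero hfin).1 hn
    have hJI : J ⊆ I := diff_eq_empty.1 hempty
    rw [hJ.eq_of_subset_indep hI.indep hJI hI.subset]
  | succ n ih =>
    have hfinJI : (J \ I).Finite := (M.set_finite J hJ.indep.subset_ground).diff
    have hne : (J \ I).Nonempty := by
      rw [nonempty_iff_ne_empty]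
      intro h
      rw [h, ncard_empty] at hn
      omega
    obtain ⟨e, heJ, heI⟩ := hne
    obtain ⟨f, hfI, hfJ, hind1, hbasis2⟩ := sym_exchange hX hI hJ heJ heI
    set J' := insert f (J \ {e}) with hJ'def
    have hJfin : J.Finite := M.set_finite J hJ.indep.subset_ground
    have hJ'card : (J' \ I).ncard = n := by
      have hseteq : J' \ I = (J \ I) \ {e} := by
        ext x
        simp only [hJ'def, mem_diff, mem_insert_iff, mem_singleton_iff]
        constructor
        · rintro ⟨rfl | ⟨hxJ, hxe⟩, hxI⟩
          · exact absurd hfI hxI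
          · exact ⟨⟨hxJ, hxI⟩, hxe⟩
        · rintro ⟨⟨hxJ, hxI⟩, hxe⟩
          exact ⟨Or.inr ⟨hxJ, hxe⟩, hxI⟩
      rw [hseteq, ncard_diff_singleton_of_mem (show e ∈ J \ I from ⟨heJ, heI⟩), hn]
      omega
    have hle' := ih J' hbasis2 hJ'card
    have hwef : w e ≤ w f := hloc e (hJ.subset heJ) heI f hfI hind1
    have h1 : wt w J = w e + wt w (J \ {e}) := wt_remove w hJfin heJ
    have h2 : wt w J' = w f + wt w (J \ {e}) :=
      wt_insert_s6 w (hJfin.diff) (fun h => hfJ h.1)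
    rw [h2] at hle'
    rw [h1]
    linarith

/-- Combining the local conditions for `I₁` (w.r.t. `B`) and `I₂` (w.r.t. `C`). -/
lemma combined_local (hC : C ⊆ M.E) (h1 : M.IsBasis I₁ B) (h2 : M.IsBasis I₂ C) (hI₂B : I₂ ⊆ B)
    (loc1 : ∀ e ∈ B, e ∉ I₁ → ∀ f ∈ I₁, M.Indep (insert e (I₁ \ {f})) → μ e ≤ μ f + ε₁)
    (loc2 : ∀ e ∈ C, e ∉ I₂ → ∀ f ∈ I₂, M.Indep (insert e (I₂ \ {f})) → μ e ≤ μ f + ε₂)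
    (hε₁ : 0 ≤ ε₁) (hε₂ : 0 ≤ ε₂) :
    ∀ e ∈ C, e ∉ I₁ → ∀ f ∈ I₁, M.Indep (insert e (I₁ \ {f})) → μ e ≤ μ f + (ε₁ + ε₂) := by
  intro e heC heI₁ f hfI₁ hind
  by_cases heB : e ∈ B
  · linarith [loc1 e heB heI₁ f hfI₁ hind]
  have heI₂ : e ∉ I₂ := fun h => heB (hI₂B h)
  have hecl : e ∉ M.closure (I₁ \ {f}) := by
    intro hc
    exact ((h1.indep.diff _).insert_dep_iff.2 ⟨hc, fun h => heI₁ h.1⟩).not_indep hind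
  have heclI₂ : e ∈ M.closure I₂ := h2.subset_closure heC
  have hKcl := mem_closure_fundSet h2.indep heclI₂ heI₂
  have hnot : ¬ {g ∈ I₂ | e ∉ M.closure (I₂ \ {g})} ⊆ M.closure (I₁ \ {f}) := fun hsub =>
    hecl (M.closure_subset_closure_of_subset_closure hsub hKcl)
  obtain ⟨g, hgK, hgcl⟩ := not_subset.1 hnot
  have hgI₂ : g ∈ I₂ := hgK.1
  have hμeg : μ e ≤ μ g + ε₂ :=
    loc2 e heC heI₂ g hgI₂ ((h2.indep.diff _).insert_indep_iff.2 (Or.inl ⟨hC heC, hgK.2⟩))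
  by_cases hgf : g = f
  · rw [hgf] at hμeg
    linarith
  have hgI₁ : g ∉ I₁ := by
    intro h
    exact hgcl (M.subset_closure _ ((h1.indep.diff _).subset_ground) ⟨h, hgf⟩)
  have hμgf : μ g ≤ μ f + ε₁ :=
    loc1 g (hI₂B hgI₂) hgI₁ f hfI₁
      ((h1.indep.diff _).insert_indep_iff.2 (Or.inl ⟨h2.indep.subset_ground hgI₂, hgcl⟩))
  linarith

end Aux

/-- Transitivity of approximate subsets: if `A` is an `ε₁`-approximate subset of `B`
and `B` is an `ε₂`-approximate subset of `C`, then `A` is an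
`(ε₁+ε₂)`-approximate subset of `C`. -/
theorem isApproxSubset_trans (M : Matroid α) [M.Finite] (μ : α → ℝ)
    (hpos : ∀ e ∈ M.E, 0 < μ e) (ε₁ ε₂ : ℝ) (hε₁ : 0 < ε₁) (hε₂ : 0 < ε₂)
    (A B C : Set α) (hAB : A ⊆ B) (hBC : B ⊆ C) (hC : C ⊆ M.E)
    (h₁ : IsApproxSubset M μ ε₁ A B) (h₂ : IsApproxSubset M μ ε₂ B C) :
    IsApproxSubset M μ (ε₁ + ε₂) A C := by
  obtain ⟨I₁, hI₁A, hopt1⟩ := h₁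
  obtain ⟨I₂, hI₂B, hopt2⟩ := h₂
  rw [restrict_indep_iff] at hI₁A hI₂B
  have hB : B ⊆ M.E := hBC.trans hC
  have hb1 : M.IsBasis I₁ B := (isBase_restrict_iff hB).1 hopt1.1
  have hb2 : M.IsBasis I₂ C := (isBase_restrict_iff hC).1 hopt2.1
  have hclI₂I₁ : M.closure I₂ ⊆ M.closure I₁ :=
    M.closure_subset_closure_of_subset_closure (hI₂B.2.trans hb1.subset_closure)
  have hb1C : M.IsBasis I₁ C :=
    hb1.indep.isBasis_of_subset_of_subset_closure (hb1.subset.trans hBC)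
      (hb2.subset_closure.trans hclI₂I₁)
  have loc1 : ∀ e ∈ B, e ∉ I₁ → ∀ f ∈ I₁, M.Indep (insert e (I₁ \ {f})) → μ e ≤ μ f + ε₁ :=
    fun e he hei f hf hind => epsOptimal_local hB hopt1 he hei hf hind
  have loc2 : ∀ e ∈ C, e ∉ I₂ → ∀ f ∈ I₂, M.Indep (insert e (I₂ \ {f})) → μ e ≤ μ f + ε₂ :=
    fun e he hei f hf hind => epsOptimal_local hC hopt2 he hei hf hind
  have loc := combined_local hC hb1 hb2 hI₂B.2 loc1 loc2 hε₁.le hε₂.le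
  refine ⟨I₁, restrict_indep_iff.2 ⟨hI₁A.1, hI₁A.2⟩, (isBase_restrict_iff hC).2 hb1C, ?_⟩
  intro J hJb
  refine local_to_global hC hb1C (modCost μ I₁ (ε₁ + ε₂)) ?_ J ((isBase_restrict_iff hC).1 hJb)
  intro e he hei f hf hind
  have hmu := loc e he hei f hf hind
  simp only [modCost, indicator_of_notMem hei, indicator_of_mem hf]
  linarith
end

section
/- In a matroid M with distinct weights, every ε-optimal basis I is elementwise-ε-optimal: if a₁ ≥ a₂ ≥ … ≥ a_k are the weights of I sorted in decreasing order and o₁ ≥ o₂ ≥ … ≥ o_k are the weights of the unique maximum-weight basis sorted decreasingly, then a_i ≥ o_i − ε for all i ∈ [k]. -/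
open Matroid Set

variable {α : Type*}

private lemma wt_coe (μ : α → ℝ) (s : Finset α) : wt μ ↑s = ∑ e ∈ s, μ e :=
  finsum_mem_coe_finset μ s

private lemma sorted_gt_get_le {l : List ℝ} (hl : l.Pairwise (· > ·)) {i j : ℕ}
    (hij : i ≤ j) (hj : j < l.length) :
    l.get ⟨j, hj⟩ ≤ l.get ⟨i, lt_of_le_of_lt hij hj⟩ := by
  rcases eq_or_lt_of_le hij with rfl | h
  · exact le_refl _
  · exact le_of_lt (hl.rel_get_of_lt (show (⟨i, _⟩ : Fin l.length) < ⟨j, hj⟩ from h))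

private lemma get_le_of_mem_take {l : List ℝ} (hl : l.Pairwise (· > ·)) {i : ℕ}
    (hi : i < l.length) {v : ℝ} (hv : v ∈ l.take (i+1)) : l.get ⟨i, hi⟩ ≤ v := by
  rw [List.mem_take_iff_getElem] at hv
  obtain ⟨j, hj, rfl⟩ := hv
  have hji : j ≤ i := by
    have := lt_of_lt_of_le hj (min_le_left _ _); omega
  exact sorted_gt_get_le hl hji hi

private lemma le_get_of_not_mem_take {l : List ℝ} (hl : l.Pairwise (· > ·)) {i : ℕ}
    (hi : i < l.length) {v : ℝ} (hvl : v ∈ l) (hv : v ∉ l.take i) : v ≤ l.get ⟨i, hi⟩ := by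
  obtain ⟨j, hj, rfl⟩ := List.mem_iff_getElem.mp hvl
  have hij : i ≤ j := by
    by_contra h
    push_neg at h
    exact hv (List.mem_take_iff_getElem.mpr ⟨j, lt_min h hj, rfl⟩)
  exact sorted_gt_get_le hl hij hj

/-- Every `ε`-optimal base is elementwise-`ε`-optimal: if the weights of `I` and of
the unique maximum-weight base `O` are sorted in decreasing order, then the `i`-th
largest weight of `I` is at least the `i`-th largest weight of `O` minus `ε`. -/
theorem epsOptimal_elementwise (M : Matroid α) [M.Finite] (μ : α → ℝ)
    (hinj : Set.InjOn μ M.E) (hpos : ∀ e ∈ M.E, 0 < μ e)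
    (ε : ℝ) (hε : 0 < ε)
    (I : Set α) (hI : EpsOptimal M μ ε I)
    (O : Set α) (hO : IsMaxWeightBase M μ O)
    (hOuniq : ∀ B, IsMaxWeightBase M μ B → B = O)
    (hIfin : I.Finite) (hOfin : O.Finite)
    (aL oL : List ℝ)
    (haL : aL = ((hIfin.toFinset.image μ).sort (· ≤ ·)).reverse)
    (hoL : oL = ((hOfin.toFinset.image μ).sort (· ≤ ·)).reverse) :
    ∀ (i : ℕ) (hia : i < aL.length) (hio : i < oL.length),
      oL.get ⟨i, hio⟩ - ε ≤ aL.get ⟨i, hia⟩ := by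
  classical
  intro i hia hio
  by_contra hcon
  push_neg at hcon
  set μ' := modCost μ I ε with hμ'def
  have hIbase : M.IsBase I := hI.1
  have hObase : M.IsBase O := hO.1
  have injI : Set.InjOn μ I := hinj.mono hIbase.subset_ground
  have injO : Set.InjOn μ O := hinj.mono hObase.subset_ground
  -- sortedness, nodup, toFinset facts for aL and oL
  have haLs : aL.Pairwise (· > ·) := by
    rw [haL, List.pairwise_reverse]
    exact (Finset.sortedLT_sort _).pairwise
  have hoLs : oL.Pairwise (· > ·) := by
    rw [hoL, List.pairwise_reverse]
    exact (Finset.sortedLT_sort _).pairwise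
  have haLnd : aL.Nodup := by
    rw [haL]; exact List.nodup_reverse.mpr (Finset.sort_nodup _ _)
  have hoLnd : oL.Nodup := by
    rw [hoL]; exact List.nodup_reverse.mpr (Finset.sort_nodup _ _)
  have haLf : aL.toFinset = hIfin.toFinset.image μ := by
    rw [haL, List.toFinset_reverse, Finset.sort_toFinset]
  have hoLf : oL.toFinset = hOfin.toFinset.image μ := by
    rw [hoL, List.toFinset_reverse, Finset.sort_toFinset]
  -- the candidate sets
  set t := aL.get ⟨i, hia⟩ with ht
  set TA : Finset ℝ := (aL.take i).toFinset with hTA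
  set TO : Finset ℝ := (oL.take (i+1)).toFinset with hTO
  set Bf : Finset α := hIfin.toFinset.filter (fun e => μ e ∈ TA) with hBf
  set Jf : Finset α := hOfin.toFinset.filter (fun e => μ e ∈ TO) with hJf
  have hBsubI : (↑Bf : Set α) ⊆ I := by
    intro x hx
    exact hIfin.mem_toFinset.mp (Finset.mem_filter.mp hx).1
  have hJsubO : (↑Jf : Set α) ⊆ O := by
    intro x hx
    exact hOfin.mem_toFinset.mp (Finset.mem_filter.mp hx).1
  -- cardinalities
  have hBimg : Bf.image μ = TA := by
    apply Finset.Subset.antisymm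
    · intro v hv
      obtain ⟨e, he, rfl⟩ := Finset.mem_image.mp hv
      exact (Finset.mem_filter.mp he).2
    · intro v hv
      have hvim : v ∈ hIfin.toFinset.image μ := by
        rw [← haLf]
        exact List.mem_toFinset.mpr (List.take_subset _ _ (List.mem_toFinset.mp hv))
      obtain ⟨e, he, hev⟩ := Finset.mem_image.mp hvim
      exact Finset.mem_image.mpr ⟨e, Finset.mem_filter.mpr ⟨he, hev ▸ hv⟩, hev⟩
  have hJimg : Jf.image μ = TO := by
    apply Finset.Subset.antisymm
    · intro v hv
      obtain ⟨e, he, rfl⟩ := Finset.mem_image.mp hv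
      exact (Finset.mem_filter.mp he).2
    · intro v hv
      have hvim : v ∈ hOfin.toFinset.image μ := by
        rw [← hoLf]
        exact List.mem_toFinset.mpr (List.take_subset _ _ (List.mem_toFinset.mp hv))
      obtain ⟨e, he, hev⟩ := Finset.mem_image.mp hvim
      exact Finset.mem_image.mpr ⟨e, Finset.mem_filter.mpr ⟨he, hev ▸ hv⟩, hev⟩
  have hBcard : Bf.card = i := by
    have h1 : (Bf.image μ).card = Bf.card :=
      Finset.card_image_of_injOn (injI.mono hBsubI)
    have h2 : TA.card = i := by
      rw [hTA, List.toFinset_card_of_nodup ((List.take_sublist _ _).nodup haLnd),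
        List.length_take]
      omega
    rw [hBimg, h2] at h1
    omega
  have hJcard : Jf.card = i + 1 := by
    have h1 : (Jf.image μ).card = Jf.card :=
      Finset.card_image_of_injOn (injO.mono hJsubO)
    have h2 : TO.card = i + 1 := by
      rw [hTO, List.toFinset_card_of_nodup ((List.take_sublist _ _).nodup hoLnd),
        List.length_take]
      omega
    rw [hJimg, h2] at h1
    omega
  -- augmentation
  have hcardlt : (↑Bf : Set α).encard < (↑Jf : Set α).encard := by
    rw [Set.encard_coe_eq_coe_finsetCard, Set.encard_coe_eq_coe_finsetCard, hBcard, hJcard]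
    exact_mod_cast Nat.lt_succ_self i
  obtain ⟨e, he, hins⟩ :=
    (hIbase.indep.subset hBsubI).augment (hObase.indep.subset hJsubO) hcardlt
  have heJf : e ∈ Jf := he.1
  have heO : e ∈ O := hJsubO he.1
  have hemu : oL.get ⟨i, hio⟩ ≤ μ e :=
    get_le_of_mem_take hoLs hio (List.mem_toFinset.mp (Finset.mem_filter.mp heJf).2)
  have hegt : t + ε < μ e := by
    have := hcon
    linarith
  have heI : e ∉ I := by
    intro heI'
    have h1 : μ e ∉ TA := by
      intro h
      exact he.2 (Finset.mem_coe.mpr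
        (Finset.mem_filter.mpr ⟨hIfin.mem_toFinset.mpr heI', h⟩))
    have h2 : μ e ∈ aL := by
      rw [← List.mem_toFinset, haLf]
      exact Finset.mem_image_of_mem μ (hIfin.mem_toFinset.mpr heI')
    have h3 : μ e ≤ t :=
      le_get_of_not_mem_take haLs hia h2 (fun h => h1 (List.mem_toFinset.mpr h))
    linarith
  -- extend to a base inside insert e I
  obtain ⟨B', hB'base, hsubB', hB'sub⟩ := hins.exists_isBase_subset_union_isBase hIbase
  rw [Set.insert_union, Set.union_eq_self_of_subset_left hBsubI] at hB'sub
  have heB' : e ∈ B' := hsubB' (Set.mem_insert _ _)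
  -- find the unique element f of I \ B'
  have hB'eq : B' = insert e (B' ∩ I) := by
    ext x
    constructor
    · intro hx
      rcases eq_or_ne x e with rfl | hne
      · exact Set.mem_insert _ _
      · exact Set.mem_insert_of_mem _ ⟨hx, (hB'sub hx).resolve_left hne⟩
    · rintro (rfl | hx)
      · exact heB'
      · exact hx.1
  have hfinBI : (B' ∩ I).Finite := hIfin.inter_of_right _
  have hencI : I.encard = (B' ∩ I).encard + 1 := by
    rw [hIbase.encard_eq_encard_of_isBase hB'base]
    conv_lhs => rw [hB'eq]
    exact Set.encard_insert_of_notMem (fun h => heI h.2)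
  have hencd : (I \ B').encard = 1 := by
    have h1 : (I \ B').encard + (I ∩ B').encard = I.encard :=
      Set.encard_diff_add_encard_inter I B'
    rw [Set.inter_comm, hencI, add_comm (B' ∩ I).encard 1] at h1
    exact WithTop.add_right_cancel hfinBI.encard_lt_top.ne h1
  obtain ⟨f, hf⟩ := Set.encard_eq_one.mp hencd
  have hfI : f ∈ I := (hf ▸ (Set.mem_singleton f) : f ∈ I \ B').1
  have hfB' : f ∉ B' := (hf ▸ (Set.mem_singleton f) : f ∈ I \ B').2
  have hfBf : f ∉ Bf := fun h => hfB' (hsubB' (Set.mem_insert_of_mem _ (Finset.mem_coe.mpr h)))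
  have hfle : μ f ≤ t := by
    have h2 : μ f ∈ aL := by
      rw [← List.mem_toFinset, haLf]
      exact Finset.mem_image_of_mem μ (hIfin.mem_toFinset.mpr hfI)
    refine le_get_of_not_mem_take haLs hia h2 (fun h => ?_)
    exact hfBf (Finset.mem_filter.mpr ⟨hIfin.mem_toFinset.mpr hfI, List.mem_toFinset.mpr h⟩)
  -- B' = insert e (I \ {f})
  have hB'eq2 : B' = insert e (I \ {f}) := by
    ext x
    constructor
    · intro hx
      rcases eq_or_ne x e with rfl | hne
      · exact Set.mem_insert _ _
      · have hxI : x ∈ I := (hB'sub hx).resolve_left hne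
        have hxf : x ≠ f := fun h => hfB' (h ▸ hx)
        exact Set.mem_insert_of_mem _ ⟨hxI, hxf⟩
    · rintro (rfl | hx)
      · exact heB'
      · by_contra hxB'
        have : x ∈ I \ B' := ⟨hx.1, hxB'⟩
        rw [hf] at this
        exact hx.2 this
  -- weight computation
  have hfmem : f ∈ hIfin.toFinset := hIfin.mem_toFinset.mpr hfI
  have hIco : (↑hIfin.toFinset : Set α) = I := hIfin.coe_toFinset
  have hB'co : (↑(insert e (hIfin.toFinset.erase f)) : Set α) = B' := by
    rw [Finset.coe_insert, Finset.coe_erase, hIco, hB'eq2]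
  have hsumI : wt μ' I = ∑ x ∈ hIfin.toFinset, μ' x := by
    conv_lhs => rw [← hIco]
    exact wt_coe μ' hIfin.toFinset
  have hwtI : wt μ' I = μ' f + ∑ x ∈ hIfin.toFinset.erase f, μ' x := by
    rw [hsumI]
    exact (Finset.add_sum_erase _ _ hfmem).symm
  have hwtB' : wt μ' B' = μ' e + ∑ x ∈ hIfin.toFinset.erase f, μ' x := by
    conv_lhs => rw [← hB'co]
    rw [wt_coe, Finset.sum_insert
      (fun h => heI (hIfin.mem_toFinset.mp (Finset.mem_of_mem_erase h)))]
  have hμ'e : μ' e = μ e := by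
    simp [hμ'def, modCost, Set.indicator_of_notMem heI]
  have hμ'f : μ' f = μ f + ε := by
    simp [hμ'def, modCost, Set.indicator_of_mem hfI]
  have hle : wt μ' B' ≤ wt μ' I := hI.2 B' hB'base
  rw [hwtI, hwtB', hμ'e, hμ'f] at hle
  linarith
end

section
/- Let M be a matroid on ground set S with injective weight function μ. Let A ⊆ OPT ⊆ B ⊆ S, where OPT is the unique maximum-weight basis. Consider M' = (M|B)/A (restrict to B then contract A), with ground set S'. Then for every element u ∈ S', the gap of u in M' is at least the gap of u in M: Δ_u^{M'} ≥ Δ_u^{M}. -/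
open Matroid Set

variable {α : Type*}

open Classical in
/-- The gap `Δ_e` of an element `e`: `+∞` for isolated elements,
`OPT(M) − OPT(M|(S∖{e}))` for elements of the optimal base, and
`OPT(M) − OPT(M/{e}) − μ e` otherwise. -/
noncomputable def gap (M : Matroid α) (μ : α → ℝ) (e : α) : EReal :=
  if ∀ B, M.IsBase B → e ∈ B then ⊤
  else if ∃ B, IsMaxWeightBase M μ B ∧ e ∈ B then
    ((OPTval M μ - OPTval (M ↾ (M.E \ {e})) μ : ℝ) : EReal)
  else ((OPTval M μ - OPTval (M.contract' {e}) μ - μ e : ℝ) : EReal)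

section helper

variable {μ : α → ℝ} {M M₁ M₂ : Matroid α} {S T A B I J : Set α} {u : α}

lemma wt_union_of_disjoint (μ : α → ℝ) (hS : S.Finite) (hT : T.Finite) (h : Disjoint S T) :
    wt μ (S ∪ T) = wt μ S + wt μ T := finsum_mem_union h hS hT

lemma wt_nonneg' (μ : α → ℝ) (hS : S.Finite) (h : ∀ e ∈ S, 0 ≤ μ e) : 0 ≤ wt μ S := by
  unfold wt
  lift S to Finset α using hS
  rw [finsum_mem_coe_finset]
  exact Finset.sum_nonneg fun i hi => h i hi

lemma wt_pos' (μ : α → ℝ) (hS : S.Finite) (hne : S.Nonempty) (h : ∀ e ∈ S, 0 < μ e) :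
    0 < wt μ S := by
  unfold wt
  lift S to Finset α using hS
  rw [finsum_mem_coe_finset]
  exact Finset.sum_pos (fun i hi => h i hi) (by simpa using hne)

lemma wt_mono (μ : α → ℝ) (hT : T.Finite) (hST : S ⊆ T) (h : ∀ e ∈ T, 0 ≤ μ e) :
    wt μ S ≤ wt μ T := by
  have hT' : T = S ∪ (T \ S) := (union_diff_cancel hST).symm
  rw [hT', wt_union_of_disjoint μ (hT.subset hST) (hT.diff) disjoint_sdiff_right]
  have := wt_nonneg' μ (hT.diff (t := S)) (fun e he => h e he.1)
  linarith

lemma wt_diff_add (μ : α → ℝ) (hS : S.Finite) (hAS : A ⊆ S) :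
    wt μ S = wt μ (S \ A) + wt μ A := by
  rw [← wt_union_of_disjoint μ (hS.diff) (hS.subset hAS) disjoint_sdiff_left,
    diff_union_of_subset hAS]

lemma bases_finite (M : Matroid α) [M.Finite] : {B | M.IsBase B}.Finite :=
  M.ground_finite.finite_subsets.subset fun _ hB => hB.subset_ground

lemma wt_le_OPTval [M.Finite] (hB : M.IsBase B) : wt μ B ≤ OPTval M μ :=
  le_csSup ((bases_finite M).image _).bddAbove ⟨B, hB, rfl⟩

lemma OPTval_le {c : ℝ} (hub : ∀ B, M.IsBase B → wt μ B ≤ c) : OPTval M μ ≤ c := by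
  refine csSup_le ?_ ?_
  · obtain ⟨B, hB⟩ := M.exists_isBase; exact ⟨_, ⟨B, hB, rfl⟩⟩
  · rintro x ⟨B, hB, rfl⟩; exact hub B hB

lemma OPTval_eq [M.Finite] (h : IsMaxWeightBase M μ I) : OPTval M μ = wt μ I :=
  le_antisymm (OPTval_le h.2) (wt_le_OPTval h.1)

lemma OPTval_add_le [M₂.Finite] {c : ℝ}
    (h : ∀ J, M₁.IsBase J → ∃ I, M₂.IsBase I ∧ wt μ J + c ≤ wt μ I) :
    OPTval M₁ μ + c ≤ OPTval M₂ μ := by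
  have h1 : OPTval M₁ μ ≤ OPTval M₂ μ - c := by
    refine OPTval_le fun J hJ => ?_
    obtain ⟨I, hI, hle⟩ := h J hJ
    have := wt_le_OPTval (μ := μ) hI
    linarith
  linarith

@[simp] lemma contract'_ground (M : Matroid α) (A : Set α) : (M.contract' A).E = M.E \ A := by
  simp [Matroid.contract']

lemma contract'_base_iff (hA : M.Indep A) :
    (M.contract' A).IsBase J ↔ ∃ D, M.IsBase D ∧ A ⊆ D ∧ J = D \ A := by
  have hAE : A ⊆ M.E := hA.subset_ground
  have hXE : M.E \ A ⊆ M✶.E := by rw [dual_ground]; exact diff_subset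
  rw [Matroid.contract', dual_isBase_iff', restrict_ground_eq,
    isBase_restrict_iff hXE]
  constructor
  · rintro ⟨hJb, hJX⟩
    obtain ⟨B', hB', hXJ⟩ := hJb.exists_isBase
    have hB'E : B' ⊆ M.E := hB'.subset_ground
    have hD : M.IsBase (M.E \ B') := hB'.compl_isBase_of_dual
    refine ⟨M.E \ B', hD, ?_, ?_⟩
    · have hiff := hD.inter_isBasis_iff_compl_inter_isBasis_dual (X := A) hAE
      rw [diff_diff_cancel_left hB'E] at hiff
      have hbas : M.IsBasis ((M.E \ B') ∩ A) A := by
        rw [hiff]; rwa [← hXJ]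
      have := hbas.eq_of_subset_indep hA inter_subset_right Subset.rfl
      rw [← this]; exact inter_subset_left
    · ext x
      constructor
      · intro hxJ
        have hxX : x ∈ M.E \ A := hJX hxJ
        have : x ∉ B' ∩ (M.E \ A) := by rw [← hXJ]; exact fun h => h.2 hxJ
        exact ⟨⟨hxX.1, fun hxB' => this ⟨hxB', hxX⟩⟩, hxX.2⟩
      · rintro ⟨⟨hxE, hxB'⟩, hxA⟩
        by_contra hxJ
        have : x ∈ B' ∩ (M.E \ A) := by rw [← hXJ]; exact ⟨⟨hxE, hxA⟩, hxJ⟩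
        exact hxB' this.1
  · rintro ⟨D, hD, hAD, rfl⟩
    have hDE : D ⊆ M.E := hD.subset_ground
    have hB' : M✶.IsBase (M.E \ D) := hD.compl_isBase_dual
    have hiff := hD.inter_isBasis_iff_compl_inter_isBasis_dual (X := A) hAE
    have hbas : M✶.IsBasis ((M.E \ D) ∩ (M.E \ A)) (M.E \ A) := by
      rw [← hiff, inter_eq_right.mpr hAD]
      exact hA.isBasis_self
    constructor
    · have : (M.E \ A) \ (D \ A) = (M.E \ D) ∩ (M.E \ A) := by
        ext x
        simp only [mem_diff, mem_inter_iff]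
        tauto
      rwa [this]
    · exact diff_subset_diff_left hDE

lemma contract'_contract' (M : Matroid α) (A : Set α) (u : α) :
    (M.contract' A).contract' {u} = M.contract' (insert u A) := by
  unfold Matroid.contract'
  rw [dual_dual]
  simp only [dual_ground, restrict_ground_eq]
  rw [restrict_restrict_eq _ diff_subset, diff_diff, union_singleton]

lemma eRank'_eq_encard_s12 (hA : M.Indep A) : M.eRank' A = A.encard := by
  refine le_antisymm (iSup₂_le fun I hI => encard_mono hI.2) ?_
  exact le_iSup₂_of_le A ⟨hA, Subset.rfl⟩ le_rfl

lemma indep_insert_of_not_blocks (hA : M.Indep A) (hAfin : A.Finite)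
    (h : ¬ M.Blocks A u) : M.Indep (insert u A) := by
  by_contra hdep
  apply h
  unfold Matroid.Blocks
  rw [eRank'_eq_encard_s12 hA]
  refine le_antisymm (iSup₂_le fun I hI => ?_) ?_
  · obtain ⟨hIind, hIsub⟩ := hI
    by_cases huI : u ∈ I
    · have hsub : I \ {u} ⊆ A := by
        intro x hx
        rcases hIsub hx.1 with h1 | h1
        · exact absurd h1 hx.2
        · exact h1
      have hss : I \ {u} ⊂ A := by
        refine hsub.ssubset_of_ne fun heq => ?_
        apply hdep
        have : insert u (I \ {u}) = I := by
          rw [insert_diff_singleton, insert_eq_self.mpr huI]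
        rw [← heq, this]
        exact hIind
      have hlt := (hAfin.subset hsub).encard_lt_encard hss
      rw [← encard_diff_singleton_add_one huI,
        ENat.add_one_le_iff (hAfin.subset hsub).encard_lt_top.ne]
      exact hlt
    · exact encard_mono ((subset_insert_iff_of_notMem huI).mp hIsub)
  · exact le_iSup₂_of_le A ⟨hA, subset_insert u A⟩ le_rfl

lemma indep_insert_of_forall_base (h : ∀ B, M.IsBase B → u ∈ B) (hI : M.Indep I) :
    M.Indep (insert u I) := by
  obtain ⟨D, hD, hID⟩ := hI.exists_isBase_superset
  exact hD.indep.subset (insert_subset (h D hD) hID)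

end helper

/-- Restricting to a superset `B` of the optimal base and contracting a subset `A`
of the optimal base can only increase the gap of each remaining element. -/
theorem gap_mono_of_restrict_contract (M : Matroid α) [M.Finite] (μ : α → ℝ)
    (hinj : Set.InjOn μ M.E) (hpos : ∀ e ∈ M.E, 0 < μ e)
    (OPT : Set α) (hOPT : IsMaxWeightBase M μ OPT)
    (hOPTuniq : ∀ B, IsMaxWeightBase M μ B → B = OPT)
    (A B : Set α) (hA : A ⊆ OPT) (hB : OPT ⊆ B) (hBE : B ⊆ M.E)
    (u : α) (hu : u ∈ ((M ↾ B).contract' A).E) (hu' : ¬ (M ↾ B).Blocks A u) :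
    gap M μ u ≤ gap ((M ↾ B).contract' A) μ u := by
  classical
  have hEfin : M.E.Finite := M.ground_finite
  have hOPTE : OPT ⊆ M.E := hOPT.1.subset_ground
  have hAE : A ⊆ M.E := hA.trans hOPTE
  have hposA : ∀ e ∈ M.E, 0 ≤ μ e := fun e he => (hpos e he).le
  have huBA : u ∈ B \ A := by rwa [contract'_ground, restrict_ground_eq] at hu
  obtain ⟨huB, huA⟩ := huBA
  have huE : u ∈ M.E := hBE huB
  haveI hNfin : (M ↾ B).Finite := restrict_finite (hEfin.subset hBE)
  haveI hM'fin : ((M ↾ B).contract' A).Finite :=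
    ⟨by rw [contract'_ground, restrict_ground_eq]; exact (hEfin.subset hBE).diff⟩
  have hAindM : M.Indep A := hOPT.1.indep.subset hA
  have hAindN : (M ↾ B).Indep A := by
    rw [restrict_indep_iff]; exact ⟨hAindM, hA.trans hB⟩
  have hOPTbN : (M ↾ B).IsBase OPT :=
    (Matroid.IsBase.isBasis_of_subset hBE hOPT.1 hB).restrict_isBase
  have hmaxN : IsMaxWeightBase (M ↾ B) μ OPT := by
    refine ⟨hOPTbN, fun J hJ => ?_⟩
    obtain ⟨D, hD, hJD⟩ := (hJ.indep.of_restrict).exists_isBase_superset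
    calc wt μ J ≤ wt μ D :=
          wt_mono μ (hEfin.subset hD.subset_ground) hJD
            (fun e he => hposA e (hD.subset_ground he))
      _ ≤ wt μ OPT := hOPT.2 D hD
  have hbase_iff : ∀ J, ((M ↾ B).contract' A).IsBase J ↔
      ∃ D, (M ↾ B).IsBase D ∧ A ⊆ D ∧ J = D \ A := fun J => contract'_base_iff hAindN
  have hOPTAb : ((M ↾ B).contract' A).IsBase (OPT \ A) := (hbase_iff _).mpr ⟨OPT, hOPTbN, hA, rfl⟩
  have hwtOPTA : wt μ OPT = wt μ (OPT \ A) + wt μ A := wt_diff_add μ (hEfin.subset hOPTE) hA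
  have hmaxM' : IsMaxWeightBase ((M ↾ B).contract' A) μ (OPT \ A) := by
    refine ⟨hOPTAb, fun J hJ => ?_⟩
    obtain ⟨D, hD, hAD, rfl⟩ := (hbase_iff J).mp hJ
    have hDE : D ⊆ M.E := (hD.subset_ground : D ⊆ B).trans hBE
    have h1 : wt μ D = wt μ (D \ A) + wt μ A := wt_diff_add μ (hEfin.subset hDE) hAD
    have h2 := hmaxN.2 D hD
    linarith
  have hmaxM'uniq : ∀ J, IsMaxWeightBase ((M ↾ B).contract' A) μ J → J = OPT \ A := by
    intro J hJ
    obtain ⟨D, hD, hAD, rfl⟩ := (hbase_iff _).mp hJ.1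
    have hDE : D ⊆ M.E := (hD.subset_ground : D ⊆ B).trans hBE
    have hge : wt μ (OPT \ A) ≤ wt μ (D \ A) := hJ.2 _ hOPTAb
    have h1 : wt μ D = wt μ (D \ A) + wt μ A := wt_diff_add μ (hEfin.subset hDE) hAD
    obtain ⟨D', hD', hDD'⟩ := (hD.indep.of_restrict).exists_isBase_superset
    have hD'E : D' ⊆ M.E := hD'.subset_ground
    have hle1 : wt μ D' ≤ wt μ OPT := hOPT.2 D' hD'
    have h2 : wt μ D' = wt μ (D' \ D) + wt μ D := wt_diff_add μ (hEfin.subset hD'E) hDD'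
    have hempty : D' \ D = ∅ := by
      by_contra hne
      have := wt_pos' μ ((hEfin.subset hD'E).diff) (nonempty_iff_ne_empty.mpr hne)
        (fun e he => hpos e (hD'E he.1))
      linarith
    have hD'D : D' = D := by
      rw [← diff_union_of_subset hDD', hempty, empty_union]
    have hDbase : M.IsBase D := hD'D ▸ hD'
    have hDopt : D = OPT := by
      refine hOPTuniq D ⟨hDbase, fun K hK => ?_⟩
      have := hOPT.2 K hK
      linarith
    rw [hDopt]
  have hval : OPTval M μ = wt μ OPT := OPTval_eq hOPT
  have hvalM' : OPTval ((M ↾ B).contract' A) μ = wt μ (OPT \ A) := OPTval_eq hmaxM'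
  by_cases hiso' : ∀ Bb, ((M ↾ B).contract' A).IsBase Bb → u ∈ Bb
  · have htop : gap ((M ↾ B).contract' A) μ u = ⊤ := by unfold gap; rw [if_pos hiso']
    rw [htop]; exact le_top
  have hiso : ¬ ∀ Bb, M.IsBase Bb → u ∈ Bb := by
    intro hall
    apply hiso'
    intro J hJ
    obtain ⟨D, hD, hAD, rfl⟩ := (hbase_iff _).mp hJ
    have huD : u ∈ D := by
      have hind : (M ↾ B).Indep (insert u D) := by
        rw [restrict_indep_iff]
        exact ⟨indep_insert_of_forall_base hall hD.indep.of_restrict,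
          insert_subset huB hD.subset_ground⟩
      have heq := hD.eq_of_subset_indep hind (subset_insert u D)
      rw [heq]; exact mem_insert u D
    exact ⟨huD, huA⟩
  unfold gap
  rw [if_neg hiso, if_neg hiso']
  by_cases huOPT : u ∈ OPT
  · rw [if_pos ⟨OPT, hOPT, huOPT⟩, if_pos ⟨OPT \ A, hmaxM', ⟨huOPT, huA⟩⟩,
      EReal.coe_le_coe_iff]
    haveI : (M ↾ (M.E \ {u})).Finite := restrict_finite (hEfin.diff)
    have key : OPTval (((M ↾ B).contract' A) ↾ (((M ↾ B).contract' A).E \ {u})) μ + wt μ A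
        ≤ OPTval (M ↾ (M.E \ {u})) μ := by
      refine OPTval_add_le fun J hJ => ?_
      have hJind : ((M ↾ B).contract' A).Indep J := hJ.indep.of_restrict
      have hJsub : J ⊆ ((M ↾ B).contract' A).E \ {u} := hJ.subset_ground
      rw [contract'_ground, restrict_ground_eq] at hJsub
      obtain ⟨D0, hD0, hJD0⟩ := hJind.exists_isBase_superset
      obtain ⟨D, hD, hAD, rfl⟩ := (hbase_iff _).mp hD0
      have hDE : D ⊆ M.E := (hD.subset_ground : D ⊆ B).trans hBE
      have hJAind : M.Indep (J ∪ A) :=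
        hD.indep.of_restrict.subset (union_subset (hJD0.trans diff_subset) hAD)
      have huJA : u ∉ J ∪ A := by
        rintro (h | h)
        · exact (hJsub h).2 rfl
        · exact huA h
      have hres : (M ↾ (M.E \ {u})).Indep (J ∪ A) := by
        rw [restrict_indep_iff]
        exact ⟨hJAind, subset_diff_singleton hJAind.subset_ground huJA⟩
      obtain ⟨I, hI, hJAI⟩ := hres.exists_isBase_superset
      have hIE : I ⊆ M.E := (hI.subset_ground : I ⊆ M.E \ {u}).trans diff_subset
      refine ⟨I, hI, ?_⟩
      have hdisj : Disjoint J A :=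
        disjoint_left.mpr fun x hxJ hxA => (hJsub hxJ).1.2 hxA
      have hJE : J ⊆ M.E := (union_subset_iff.mp hJAind.subset_ground).1
      rw [← wt_union_of_disjoint μ (hEfin.subset hJE) (hEfin.subset hAE) hdisj]
      exact wt_mono μ (hEfin.subset hIE) hJAI (fun e he => hposA e (hIE he))
    linarith
  · have hneg1 : ¬ ∃ Bb, IsMaxWeightBase M μ Bb ∧ u ∈ Bb := by
      rintro ⟨Bb, hBb, huBb⟩
      rw [hOPTuniq Bb hBb] at huBb; exact huOPT huBb
    have hneg2 : ¬ ∃ Bb, IsMaxWeightBase ((M ↾ B).contract' A) μ Bb ∧ u ∈ Bb := by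
      rintro ⟨Bb, hBb, huBb⟩
      rw [hmaxM'uniq Bb hBb] at huBb; exact huOPT huBb.1
    rw [if_neg hneg1, if_neg hneg2, EReal.coe_le_coe_iff]
    have hA'ind : (M ↾ B).Indep (insert u A) :=
      indep_insert_of_not_blocks hAindN (hEfin.subset hAE) hu'
    have huind : M.Indep {u} :=
      hA'ind.of_restrict.subset (singleton_subset_iff.mpr (mem_insert u A))
    haveI : (M.contract' {u}).Finite := ⟨by rw [contract'_ground]; exact hEfin.diff⟩
    have key : OPTval (((M ↾ B).contract' A).contract' {u}) μ + wt μ A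
        ≤ OPTval (M.contract' {u}) μ := by
      refine OPTval_add_le fun J hJ => ?_
      rw [contract'_contract'] at hJ
      obtain ⟨D, hD, hA'D, rfl⟩ := (contract'_base_iff hA'ind).mp hJ
      have hDE : D ⊆ M.E := (hD.subset_ground : D ⊆ B).trans hBE
      obtain ⟨D'', hD'', hDD''⟩ := hD.indep.of_restrict.exists_isBase_superset
      have huD'' : u ∈ D'' := hDD'' (hA'D (mem_insert u A))
      refine ⟨D'' \ {u},
        (contract'_base_iff huind).mpr ⟨D'', hD'', singleton_subset_iff.mpr huD'', rfl⟩, ?_⟩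
      have hADsub : A ⊆ D := (subset_insert u A).trans hA'D
      have hJA : (D \ insert u A) ∪ A = D \ {u} := by
        ext x
        simp only [mem_union, mem_diff, mem_insert_iff, mem_singleton_iff]
        constructor
        · rintro (⟨hxD, hx⟩ | hxA)
          · exact ⟨hxD, fun h => hx (Or.inl h)⟩
          · exact ⟨hADsub hxA, fun h => huA (h ▸ hxA)⟩
        · rintro ⟨hxD, hxu⟩
          by_cases hxA : x ∈ A
          · exact Or.inr hxA
          · exact Or.inl ⟨hxD, fun h => h.elim hxu hxA⟩
      have hdisj : Disjoint (D \ insert u A) A :=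
        disjoint_left.mpr fun x hx hxA => hx.2 (Or.inr hxA)
      rw [← wt_union_of_disjoint μ (hEfin.subset (diff_subset.trans hDE))
        (hEfin.subset hAE) hdisj, hJA]
      exact wt_mono μ (hEfin.subset (diff_subset.trans hD''.subset_ground))
        (diff_subset_diff_left hDD'')
        (fun e he => hposA e (hD''.subset_ground he.1))
    linarith
end

section
/- Let M be a matroid with cost μ, let ε > 0, and let I be an ε-optimal basis. For every r ∈ ℝ, letting D_r = (S \ I)^{≥ r+ε} ∪ I^{≥ r}, the set I^{≥r} is a basis of the restriction M|D_r. -/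
open Matroid Set

variable {α : Type*}

/-- If `I` is an `ε`-optimal base, then for every real `r`, the set `I^{≥ r}`
is a basis of the restriction of `M` to `D_r = (S \ I)^{≥ r+ε} ∪ I^{≥ r}`. -/
theorem epsOptimal_basis_threshold (M : Matroid α) [M.Finite] (μ : α → ℝ)
    (hpos : ∀ e ∈ M.E, 0 < μ e) (ε : ℝ) (hε : 0 < ε)
    (I : Set α) (hI : EpsOptimal M μ ε I) (r : ℝ) :
    M.IsBasis {x ∈ I | r ≤ μ x} ({x ∈ M.E \ I | r + ε ≤ μ x} ∪ {x ∈ I | r ≤ μ x}) := by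
  obtain ⟨hIbase, hmax⟩ := hI
  have hIE : I ⊆ M.E := hIbase.subset_ground
  have hIfin : I.Finite := M.ground_finite.subset hIE
  set J := {x ∈ I | r ≤ μ x} with hJ
  have hJI : J ⊆ I := fun x hx => hx.1
  have hJindep : M.Indep J := hIbase.indep.subset hJI
  refine hJindep.isBasis_of_forall_insert subset_union_right ?_
  rintro e ⟨heX, heJ⟩
  rw [Matroid.Dep]
  refine ⟨fun hins => ?_, insert_subset ?_ (hJI.trans hIE)⟩
  swap
  · rcases heX with h | h
    · exact h.1.1
    · exact hIE h.1
  have he : e ∈ M.E \ I ∧ r + ε ≤ μ e := by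
    rcases heX with h | h
    · exact h
    · exact absurd h heJ
  have heI : e ∉ I := he.1.2
  -- extend insert e J to a base B' inside insert e I
  obtain ⟨B', hB', hJB', hB'sub⟩ := hins.exists_isBase_subset_union_isBase hIbase
  have hB'sub' : B' ⊆ insert e I := by
    refine hB'sub.trans ?_
    rintro x (hx | hx)
    · rcases hx with rfl | hx
      · exact mem_insert _ _
      · exact Or.inr (hJI hx)
    · exact Or.inr hx
  have heB' : e ∈ B' := hJB' (mem_insert _ _)
  -- I \ B' is nonempty
  have hne : (I \ B').Nonempty := by
    rw [nonempty_iff_ne_empty]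
    intro h0
    have hIB' : I ⊆ B' := fun x hx => by
      by_contra hxB'
      exact (Set.not_nonempty_empty) ⟨x, h0 ▸ ⟨hx, hxB'⟩⟩
    have : B' = insert e I := subset_antisymm hB'sub' (insert_subset heB' hIB')
    exact (hIbase.insert_dep ⟨he.1.1, heI⟩).not_indep (this ▸ hB'.indep)
  obtain ⟨y, hyI, hyB'⟩ := hne
  have hyJ : y ∉ J := fun hy => hyB' (hJB' (mem_insert_of_mem _ hy))
  have hyr : μ y < r := by
    by_contra h
    exact hyJ ⟨hyI, le_of_not_gt h⟩
  -- exchange: get a base insert f (I \ {y}) with f ∈ B' \ I, hence f = e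
  obtain ⟨f, hf, hK⟩ := hIbase.exchange hB' ⟨hyI, hyB'⟩
  have hfe : f = e := by
    rcases hB'sub' hf.1 with h | h
    · exact h
    · exact absurd h hf.2
  rw [hfe] at hK
  -- weight comparison
  have hle := hmax _ hK
  have hIy : I = insert y (I \ {y}) := by
    rw [insert_diff_singleton, insert_eq_of_mem hyI]
  have hfin' : (I \ {y}).Finite := hIfin.diff
  have heIy : e ∉ I \ {y} := fun h => heI h.1
  have hyIy : y ∉ I \ {y} := fun h => h.2 rfl
  have h1 : wt (modCost μ I ε) (insert e (I \ {y})) =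
      modCost μ I ε e + wt (modCost μ I ε) (I \ {y}) :=
    finsum_mem_insert _ heIy hfin'
  have h2 : wt (modCost μ I ε) I =
      modCost μ I ε y + wt (modCost μ I ε) (I \ {y}) := by
    have h := finsum_mem_insert (modCost μ I ε) hyIy hfin'
    rw [← hIy] at h
    exact h
  rw [h1, h2] at hle
  have hle' : modCost μ I ε e ≤ modCost μ I ε y := by linarith
  have hce : modCost μ I ε e = μ e := by
    simp [modCost, indicator_of_notMem heI]
  have hcy : modCost μ I ε y = μ y + ε := by
    simp [modCost, indicator_of_mem hyI]
  rw [hce, hcy] at hle'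
  linarith [he.2]
end

section
/- Let X₁, …, X_k be independent random variables where each X_i takes a value a_i ≥ 0 with probability at most exp(−a_i² t) for some t ≥ 0, and takes value 0 otherwise. Let X = (1/k)∑_{i=1}^k X_i. Then for every ε > 0, if t ≥ 2/ε², we have Pr[X > ε] < exp(−ε² t k / 2). -/
open MeasureTheory ProbabilityTheory

/-- Chernoff-type bound: if `X₁,…,X_k` are independent, each `Xᵢ` takes the value
`aᵢ ≥ 0` with probability at most `exp(−aᵢ² t)` and `0` otherwise, and `X` is their
average, then for `ε > 0` with `t ≥ 2/ε²` we have `Pr[X > ε] < exp(−ε² t k / 2)`. -/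
theorem chernoff_type_bound {Ω : Type*} [MeasurableSpace Ω]
    (P : Measure Ω) [IsProbabilityMeasure P]
    (k : ℕ) (hk : 0 < k)
    (X : Fin k → Ω → ℝ) (a : Fin k → ℝ) (t ε : ℝ)
    (hmeas : ∀ i, Measurable (X i))
    (hindep : iIndepFun X P)
    (ha : ∀ i, 0 ≤ a i)
    (hval : ∀ i ω, X i ω = a i ∨ X i ω = 0)
    (ht : 0 ≤ t)
    (hprob : ∀ i, P {ω | X i ω = a i} ≤ ENNReal.ofReal (Real.exp (-(a i) ^ 2 * t)))
    (hε : 0 < ε) (htε : 2 / ε ^ 2 ≤ t) :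
    P {ω | ε < (∑ i, X i ω) / k} < ENNReal.ofReal (Real.exp (-(ε ^ 2 * t * k) / 2)) := by
  have hk' : (0:ℝ) < k := by exact_mod_cast hk
  have hε2 : (0:ℝ) < ε ^ 2 := by positivity
  have htε2 : (2:ℝ) ≤ ε ^ 2 * t := by
    rw [div_le_iff₀ hε2] at htε; linarith [htε]
  have ht0 : (0:ℝ) < t := by nlinarith
  -- the family of "bad" subsets
  set 𝒮 : Finset (Finset (Fin k)) :=
    Finset.univ.filter (fun S => ε * k < ∑ i ∈ S, a i) with h𝒮
  -- the event is included in the union of intersection events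
  have hsub : {ω | ε < (∑ i, X i ω) / k} ⊆ ⋃ S ∈ 𝒮, ⋂ i ∈ S, {ω | X i ω = a i} := by
    intro ω hω
    simp only [Set.mem_setOf_eq] at hω
    set S : Finset (Fin k) := Finset.univ.filter (fun i => X i ω ≠ 0) with hS
    have hXa : ∀ i ∈ S, X i ω = a i := by
      intro i hi
      rcases hval i ω with h | h
      · exact h
      · rw [hS, Finset.mem_filter] at hi
        exact absurd h hi.2
    have hsum : (∑ i, X i ω) = ∑ i ∈ S, a i := by
      rw [← Finset.sum_filter_ne_zero (s := Finset.univ) (f := fun i => X i ω)]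
      exact Finset.sum_congr rfl hXa
    have hεk : ε * k < ∑ i ∈ S, a i := by
      rw [← hsum]
      rw [lt_div_iff₀ hk'] at hω
      exact hω
    have hmem : S ∈ 𝒮 := by
      rw [h𝒮, Finset.mem_filter]
      exact ⟨Finset.mem_univ _, hεk⟩
    exact Set.mem_biUnion hmem (by simp only [Set.mem_iInter]; exact hXa)
  -- each intersection event has small probability
  have hPA : ∀ S ∈ 𝒮, P (⋂ i ∈ S, {ω | X i ω = a i})
      ≤ ENNReal.ofReal (Real.exp (-(ε ^ 2 * t * k))) := by
    intro S hS
    have hεk : ε * k < ∑ i ∈ S, a i := by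
      rw [h𝒮, Finset.mem_filter] at hS; exact hS.2
    have hScard : 0 < S.card := by
      rcases Finset.eq_empty_or_nonempty S with h | h
      · exfalso; rw [h] at hεk; simp at hεk; nlinarith
      · exact Finset.card_pos.mpr h
    have hmeasS : ∀ i ∈ S,
        MeasurableSet[(inferInstance : MeasurableSpace ℝ).comap (X i)] {ω | X i ω = a i} := by
      intro i _
      exact ⟨{a i}, measurableSet_singleton _, rfl⟩
    rw [hindep.meas_biInter hmeasS]
    calc ∏ i ∈ S, P {ω | X i ω = a i}
        ≤ ∏ i ∈ S, ENNReal.ofReal (Real.exp (-(a i) ^ 2 * t)) :=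
          Finset.prod_le_prod' fun i _ => hprob i
      _ = ENNReal.ofReal (∏ i ∈ S, Real.exp (-(a i) ^ 2 * t)) :=
          (ENNReal.ofReal_prod_of_nonneg fun i _ => (Real.exp_pos _).le).symm
      _ = ENNReal.ofReal (Real.exp (∑ i ∈ S, -(a i) ^ 2 * t)) := by rw [Real.exp_sum]
      _ ≤ ENNReal.ofReal (Real.exp (-(ε ^ 2 * t * k))) := by
          apply ENNReal.ofReal_le_ofReal
          apply Real.exp_le_exp.mpr
          have hcs : (∑ i ∈ S, a i) ^ 2 ≤ S.card * ∑ i ∈ S, (a i) ^ 2 :=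
            sq_sum_le_card_mul_sum_sq
          have hcard : (S.card : ℝ) ≤ k := by
            exact_mod_cast Finset.card_le_card (Finset.subset_univ S) |>.trans_eq
              (by simp)
          have hsa : (0:ℝ) ≤ ∑ i ∈ S, a i := Finset.sum_nonneg fun i _ => ha i
          have hsa2 : (0:ℝ) ≤ ∑ i ∈ S, (a i) ^ 2 :=
            Finset.sum_nonneg fun i _ => sq_nonneg _
          have h1 : ε ^ 2 * k ^ 2 ≤ (∑ i ∈ S, a i) ^ 2 := by
            nlinarith [mul_pos hε hk', hεk]
          have h2 : ε ^ 2 * k ≤ ∑ i ∈ S, (a i) ^ 2 := by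
            have hSc : (0:ℝ) < S.card := by exact_mod_cast hScard
            nlinarith [mul_le_mul_of_nonneg_right hcard hsa2]
          have : ∑ i ∈ S, -(a i) ^ 2 * t = -(∑ i ∈ S, (a i) ^ 2) * t := by
            rw [← Finset.sum_mul, ← Finset.sum_neg_distrib]
          rw [this]
          nlinarith
  -- put it together
  have hKey : P {ω | ε < (∑ i, X i ω) / k}
      ≤ (2 ^ k : ℕ) * ENNReal.ofReal (Real.exp (-(ε ^ 2 * t * k))) := by
    calc P {ω | ε < (∑ i, X i ω) / k}
        ≤ P (⋃ S ∈ 𝒮, ⋂ i ∈ S, {ω | X i ω = a i}) := measure_mono hsub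
      _ ≤ ∑ S ∈ 𝒮, P (⋂ i ∈ S, {ω | X i ω = a i}) := measure_biUnion_finset_le _ _
      _ ≤ ∑ _S ∈ 𝒮, ENNReal.ofReal (Real.exp (-(ε ^ 2 * t * k))) := Finset.sum_le_sum hPA
      _ = 𝒮.card * ENNReal.ofReal (Real.exp (-(ε ^ 2 * t * k))) := by
          rw [Finset.sum_const, nsmul_eq_mul]
      _ ≤ (2 ^ k : ℕ) * ENNReal.ofReal (Real.exp (-(ε ^ 2 * t * k))) := by
          have hc : 𝒮.card ≤ 2 ^ k := by
            rw [h𝒮]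
            exact (Finset.card_filter_le _ _).trans (by simp)
          exact mul_le_mul_left (by exact_mod_cast hc) _
  refine lt_of_le_of_lt hKey ?_
  have : ((2 ^ k : ℕ) : ENNReal) * ENNReal.ofReal (Real.exp (-(ε ^ 2 * t * k)))
      = ENNReal.ofReal (((2 ^ k : ℕ) : ℝ) * Real.exp (-(ε ^ 2 * t * k))) := by
    rw [ENNReal.ofReal_mul (by positivity), ENNReal.ofReal_natCast]
  rw [this]
  apply (ENNReal.ofReal_lt_ofReal_iff (Real.exp_pos _)).mpr
  -- the real inequality
  have h2k : ((2 ^ k : ℕ) : ℝ) = Real.exp (k * Real.log 2) := by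
    rw [Real.exp_nat_mul, Real.exp_log two_pos]
    push_cast; ring
  rw [h2k, ← Real.exp_add]
  apply Real.exp_lt_exp.mpr
  have hlog2 : Real.log 2 < 1 := by
    have := Real.log_two_lt_d9
    linarith
  have hk1 : (1:ℝ) ≤ k := by exact_mod_cast hk
  nlinarith [mul_le_mul_of_nonneg_right htε2 hk'.le]
end

section
/- Let M be a matroid with injective weights, OPT its unique maximum-weight basis, and I any basis output by the greedy algorithm with respect to an empirical cost function μ̂ satisfying |μ(e) − μ̂(e)| ≤ ε/2 for all e ∈ S. Then I is ε-optimal for M with respect to μ. -/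
open Matroid Set

variable {α : Type*}

lemma wt_finset' (μ : α → ℝ) {S : Set α} (h : S.Finite) :
    wt μ S = ∑ e ∈ h.toFinset, μ e := by
  rw [wt, ← finsum_mem_coe_finset, h.coe_toFinset]

/-- If `μ̂` is within `ε/2` of `μ` on the ground set and `I` is a maximum-weight
base with respect to `μ̂`, then `I` is `ε`-optimal with respect to `μ`. -/
theorem epsOptimal_of_empirical (M : Matroid α) [M.Finite] (μ μhat : α → ℝ)
    (hinj : Set.InjOn μ M.E) (hpos : ∀ e ∈ M.E, 0 < μ e)
    (ε : ℝ) (hε : 0 < ε)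
    (hclose : ∀ e ∈ M.E, |μ e - μhat e| ≤ ε / 2)
    (I : Set α) (hI : IsMaxWeightBase M μhat I) :
    EpsOptimal M μ ε I := by
  classical
  obtain ⟨hIb, hImax⟩ := hI
  refine ⟨hIb, fun J hJ => ?_⟩
  have hIfin : I.Finite := M.set_finite I hIb.subset_ground
  have hJfin : J.Finite := M.set_finite J hJ.subset_ground
  set IF := hIfin.toFinset with hIF
  set JF := hJfin.toFinset with hJF
  -- indicator sums
  have hind : ∀ SF : Finset α, ∑ e ∈ SF, I.indicator (fun _ => ε) e
      = (SF ∩ IF).card * ε := by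
    intro SF
    calc ∑ e ∈ SF, I.indicator (fun _ => ε) e
        = ∑ e ∈ SF, if e ∈ IF then ε else 0 := by
          refine Finset.sum_congr rfl fun e _ => ?_
          simp [Set.indicator_apply, hIF, hIfin.mem_toFinset]
      _ = ∑ e ∈ SF ∩ IF, ε := Finset.sum_ite_mem SF IF _
      _ = (SF ∩ IF).card * ε := by rw [Finset.sum_const, nsmul_eq_mul]
  have hwtmod : ∀ {S : Set α} (h : S.Finite),
      wt (modCost μ I ε) S = ∑ e ∈ h.toFinset, μ e
        + (h.toFinset ∩ IF).card * ε := by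
    intro S h
    rw [wt_finset' _ h]
    simp only [modCost]
    rw [Finset.sum_add_distrib, hind]
  rw [hwtmod hJfin, hwtmod hIfin]
  -- the empirical comparison
  have hhat : ∑ e ∈ JF, μhat e ≤ ∑ e ∈ IF, μhat e := by
    have := hImax J hJ
    rwa [wt_finset' _ hJfin, wt_finset' _ hIfin] at this
  -- split sums
  have hsplitJ : ∀ f : α → ℝ, ∑ e ∈ JF ∩ IF, f e + ∑ e ∈ JF \ IF, f e
      = ∑ e ∈ JF, f e := fun f => Finset.sum_inter_add_sum_sdiff JF IF f
  have hsplitI : ∀ f : α → ℝ, ∑ e ∈ JF ∩ IF, f e + ∑ e ∈ IF \ JF, f e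
      = ∑ e ∈ IF, f e := by
    intro f
    rw [Finset.inter_comm]
    exact Finset.sum_inter_add_sum_sdiff IF JF f
  have hhat' : ∑ e ∈ JF \ IF, μhat e ≤ ∑ e ∈ IF \ JF, μhat e := by
    have h1 := hsplitJ μhat
    have h2 := hsplitI μhat
    linarith
  -- equal cardinalities of the differences
  have hcard : (JF \ IF).card = (IF \ JF).card := by
    have h1 : ((JF \ IF : Finset α) : Set α) = J \ I := by
      simp [hJF, hIF, Finset.coe_sdiff, hIfin.coe_toFinset, hJfin.coe_toFinset]
    have h2 : ((IF \ JF : Finset α) : Set α) = I \ J := by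
      simp [hJF, hIF, Finset.coe_sdiff, hIfin.coe_toFinset, hJfin.coe_toFinset]
    have h3 := hJ.ncard_diff_comm hIb
    rw [← Set.ncard_coe_finset, ← Set.ncard_coe_finset, h1, h2]
    exact h3
  -- pointwise bounds on the differences
  have hDJ : ∑ e ∈ JF \ IF, μ e
      ≤ ∑ e ∈ JF \ IF, μhat e + (JF \ IF).card * (ε / 2) := by
    have : ∑ e ∈ JF \ IF, μ e ≤ ∑ e ∈ JF \ IF, (μhat e + ε / 2) := by
      refine Finset.sum_le_sum fun e he => ?_
      have heJ : e ∈ J := hJfin.mem_toFinset.mp (Finset.mem_sdiff.mp he).1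
      have heE : e ∈ M.E := hJ.subset_ground heJ
      have := abs_le.mp (hclose e heE)
      linarith [this.2]
    rwa [Finset.sum_add_distrib, Finset.sum_const, nsmul_eq_mul] at this
  have hDI : ∑ e ∈ IF \ JF, μhat e
      ≤ ∑ e ∈ IF \ JF, μ e + (IF \ JF).card * (ε / 2) := by
    have : ∑ e ∈ IF \ JF, μhat e ≤ ∑ e ∈ IF \ JF, (μ e + ε / 2) := by
      refine Finset.sum_le_sum fun e he => ?_
      have heI : e ∈ I := hIfin.mem_toFinset.mp (Finset.mem_sdiff.mp he).1
      have heE : e ∈ M.E := hIb.subset_ground heI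
      have := abs_le.mp (hclose e heE)
      linarith [this.1]
    rwa [Finset.sum_add_distrib, Finset.sum_const, nsmul_eq_mul] at this
  -- cardinality bookkeeping
  have hcardI : (IF ∩ IF).card = (JF ∩ IF).card + (IF \ JF).card := by
    rw [Finset.inter_self, ← Finset.card_inter_add_card_sdiff IF JF,
      Finset.inter_comm]
  have hcardR : ((JF \ IF).card : ℝ) = ((IF \ JF).card : ℝ) := by
    exact_mod_cast hcard
  have hsJμ := hsplitJ μ
  have hsIμ := hsplitI μ
  have hcardIR : ((IF ∩ IF).card : ℝ)
      = ((JF ∩ IF).card : ℝ) + ((IF \ JF).card : ℝ) := by exact_mod_cast hcardI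
  nlinarith [hDJ, hDI, hhat', hsJμ, hsIμ, hcardR, hcardIR]
end
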